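/- Let Y be a pure 4-dimensional simplicial complex on at most 7 vertices in which every 3-face is contained in at least two facets. Then Y contains a subcomplex which is a combinatorial 4-sphere; more precisely, Y contains either the standard 4-sphere on some 6 of its vertices, or the join of the standard spheres on the two parts of some partition V(Y) = V₁ ⊔ V₂ with |V₁|, |V₂| ≥ 2. -/

import Mathlib

/- Formalization of definitions from:
   B. Bagchi, B. Datta, "Combinatorial triangulations of homology spheres". -/

open Finset

noncomputable section

attribute [local instance] Classical.propDecidable

namespace HomologySpheres

variable {V : Type*} [DecidableEq V] {W : Type*} [DecidableEq W]

/-- The vertex set of a finite family of finite sets. -/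
def verts (K : Finset (Finset V)) : Finset V := K.sup id

/-- An (abstract, finite) simplicial complex: a nonempty collection of nonempty
finite sets closed under taking nonempty subsets. -/
def IsComplex (K : Finset (Finset V)) : Prop :=
  K.Nonempty ∧ ∅ ∉ K ∧ ∀ s ∈ K, ∀ t : Finset V, t ⊆ s → t.Nonempty → t ∈ K

/-- The facets (maximal faces) of `K`. -/
def facets (K : Finset (Finset V)) : Finset (Finset V) :=
  K.filter fun s => ∀ t ∈ K, s ⊆ t → t = s

/-- `K` is pure of dimension `d`: every maximal face has `d + 1` vertices. -/
def IsPure (d : ℕ) (K : Finset (Finset V)) : Prop :=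
  ∀ s ∈ facets K, s.card = d + 1

/-- The link of a face `σ` in `K`. -/
def link (K : Finset (Finset V)) (σ : Finset V) : Finset (Finset V) :=
  K.filter fun τ => Disjoint τ σ ∧ τ ∪ σ ∈ K

/-- `L` is an induced (full) subcomplex of `K`. -/
def IsInduced (K L : Finset (Finset V)) : Prop :=
  L ⊆ K ∧ ∀ s ∈ K, s ⊆ verts L → s ∈ L

/-- The simplicial complement `C(L, K)`: the induced subcomplex of `K` on
`V(K) \ V(L)`. -/
def simpComplement (L K : Finset (Finset V)) : Finset (Finset V) :=
  K.filter fun s => s ⊆ verts K \ verts L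

/-- The simplicial neighbourhood `N(L, K)`: the subcomplex of `K` whose maximal
faces are the maximal faces of `K` meeting `V(L)`. -/
def simpNbhd (L K : Finset (Finset V)) : Finset (Finset V) :=
  K.filter fun s => ∃ t ∈ facets K, s ⊆ t ∧ (t ∩ verts L).Nonempty

/-- `fvec K i` is the number of `i`-dimensional faces of `K`. -/
def fvec (K : Finset (Finset V)) (i : ℕ) : ℕ :=
  (K.filter fun s => s.card = i + 1).card

/-- The number of facets of cardinality `d + 1` containing a given `(d-1)`-face
(the degree of the face in a (weak) pseudomanifold of dimension `d`). -/
def degOf (K : Finset (Finset V)) (d : ℕ) (s : Finset V) : ℕ :=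
  (K.filter fun t => s ⊆ t ∧ t.card = d + 1).card

/-- Simplicial isomorphism (via a vertex bijection carrying faces to faces). -/
def Iso (K : Finset (Finset V)) (L : Finset (Finset W)) : Prop :=
  ∃ f : V → W, Set.InjOn f ↑(verts K) ∧ L = K.image (Finset.image f)

/-- The join of two simplicial complexes (on disjoint vertex sets). -/
def sjoin (K L : Finset (Finset V)) : Finset (Finset V) :=
  K ∪ L ∪ (K ×ˢ L).image fun p => p.1 ∪ p.2

/-- The standard ball on vertex set `A`: all nonempty subsets of `A`. -/
def stdBall (A : Finset V) : Finset (Finset V) := A.powerset.erase ∅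

/-- The standard sphere on vertex set `A`: all nonempty proper subsets of `A`. -/
def stdSphere (A : Finset V) : Finset (Finset V) := (A.powerset.erase ∅).erase A

/-- `τ` is a free face of `K`, with `σ` the unique face properly containing it. -/
def IsFreeFace (K : Finset (Finset V)) (τ σ : Finset V) : Prop :=
  τ ∈ K ∧ σ ∈ K ∧ τ ⊂ σ ∧ ∀ ρ ∈ K, τ ⊂ ρ → ρ = σ

/-- An elementary collapse removes a free face together with the unique face
properly containing it. -/
def ElemCollapse (K K' : Finset (Finset V)) : Prop :=
  ∃ τ σ : Finset V, IsFreeFace K τ σ ∧ K' = (K.erase τ).erase σ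

/-- `K` collapses to `L` by a sequence of elementary collapses. -/
def CollapsesTo (K L : Finset (Finset V)) : Prop :=
  Relation.ReflTransGen ElemCollapse K L

/-- `K` is collapsible: it collapses to a single vertex. -/
def Collapsible (K : Finset (Finset V)) : Prop :=
  ∃ v : V, CollapsesTo K {{v}}

/-! ### Simplicial homology with `ℤ/2` coefficients (augmented chain complex).
A chain of level `n` is a `ZMod 2`-valued function supported on the faces of
cardinality `n` (the empty set, of cardinality `0`, serves as the `(-1)`-simplex
of the augmented complex).  Reduced homology in dimension `q` lives at level
`q + 1`. -/

/-- `c` is a chain of level `n` of `K` (over `ℤ/2`). -/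
def z2chainOK (K : Finset (Finset V)) (n : ℕ) (c : Finset V → ZMod 2) : Prop :=
  ∀ s : Finset V, c s ≠ 0 → s.card = n ∧ (s ∈ K ∨ s = ∅)

/-- The mod-2 boundary operator. -/
def z2bdry (K : Finset (Finset V)) (c : Finset V → ZMod 2) : Finset V → ZMod 2 :=
  fun t => ∑ v ∈ verts K \ t, c (insert v t)

/-- `K` is `ℤ/2`-acyclic: all reduced homology with `ℤ/2` coefficients vanishes,
i.e. in the augmented mod-2 chain complex every cycle is a boundary. -/
def Z2Acyclic (K : Finset (Finset V)) : Prop :=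
  ∀ (n : ℕ) (c : Finset V → ZMod 2), z2chainOK K n c → z2bdry K c = 0 →
    ∃ c', z2chainOK K (n + 1) c' ∧ z2bdry K c' = c

/-- `K` has the reduced `ℤ/2`-homology of the `d`-sphere: reduced homology
vanishes in all dimensions except `d` (level `d + 1`), where it is `ℤ/2`
(there is a cycle `z` which is not a boundary, and modulo boundaries every
cycle is `0` or `z`). -/
def Z2HomologySphere (d : ℕ) (K : Finset (Finset V)) : Prop :=
  (∀ (n : ℕ) (c : Finset V → ZMod 2), n ≠ d + 1 → z2chainOK K n c →
    z2bdry K c = 0 → ∃ c', z2chainOK K (n + 1) c' ∧ z2bdry K c' = c) ∧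
  (∃ z : Finset V → ZMod 2, z2chainOK K (d + 1) z ∧ z2bdry K z = 0 ∧
    (∀ c', z2chainOK K (d + 2) c' → z2bdry K c' ≠ z) ∧
    (∀ z', z2chainOK K (d + 1) z' → z2bdry K z' = 0 →
      (∃ c', z2chainOK K (d + 2) c' ∧ z2bdry K c' = z') ∨
      (∃ c', z2chainOK K (d + 2) c' ∧ z2bdry K c' = z + z')))

/-! ### Integral simplicial homology via ordered chains (Munkres §13: ordered
simplicial homology, allowing repeated vertices, agrees with simplicial
homology). An ordered `m`-tuple chain corresponds to dimension `m - 1`; the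
unique `0`-tuple is the `(-1)`-simplex of the augmented complex. -/

/-- `c` is an ordered chain of `K` over `ℤ`: supported on tuples whose image is
a face (the empty tuple being allowed in level `0`). -/
def zchainOK (K : Finset (Finset V)) {m : ℕ} (c : (Fin m → V) → ℤ) : Prop :=
  ∀ x : Fin m → V, c x ≠ 0 → (Finset.univ.image x ∈ K ∨ m = 0)

/-- The integral boundary operator on ordered chains. -/
def zbdry (K : Finset (Finset V)) {m : ℕ} (c : (Fin (m + 1) → V) → ℤ) :
    (Fin m → V) → ℤ :=
  fun y => ∑ i : Fin (m + 1), (-1 : ℤ) ^ (i : ℕ) * ∑ v ∈ verts K, c (i.insertNth v y)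

/-- `K` has the reduced integral homology of the `d`-sphere: reduced homology
vanishes in all dimensions except `d`, where it is infinite cyclic (there is a
cycle `z` such that every cycle is, modulo boundaries, a unique multiple of `z`). -/
def ZHomologySphere (d : ℕ) (K : Finset (Finset V)) : Prop :=
  (∀ c : (Fin 0 → V) → ℤ, ∃ c' : (Fin 1 → V) → ℤ, zchainOK K c' ∧ zbdry K c' = c) ∧
  (∀ (m : ℕ) (c : (Fin (m + 1) → V) → ℤ), m ≠ d → zchainOK K c → zbdry K c = 0 →
    ∃ c' : (Fin (m + 2) → V) → ℤ, zchainOK K c' ∧ zbdry K c' = c) ∧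
  (∃ z : (Fin (d + 1) → V) → ℤ, zchainOK K z ∧ zbdry K z = 0 ∧
    ∀ z' : (Fin (d + 1) → V) → ℤ, zchainOK K z' → zbdry K z' = 0 →
      ∃! k : ℤ, ∃ c'' : (Fin (d + 2) → V) → ℤ,
        zchainOK K c'' ∧ zbdry K c'' = z' - k • z)

/-- A weak pseudomanifold of dimension `d`: pure, and every `(d-1)`-face is in
exactly two facets. -/
def IsWeakPseudomanifold (d : ℕ) (K : Finset (Finset V)) : Prop :=
  IsComplex K ∧ IsPure d K ∧ ∀ s ∈ K, s.card = d → degOf K d s = 2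

/-- Adjacency of facets along a common `(d-1)`-face. -/
def FacetAdj (d : ℕ) (K : Finset (Finset V)) (s t : Finset V) : Prop :=
  s ∈ K ∧ t ∈ K ∧ s.card = d + 1 ∧ t.card = d + 1 ∧ (s ∩ t).card = d

/-- A pseudomanifold: a weak pseudomanifold in which any two facets are joined
by a chain of facets, consecutive ones sharing a `(d-1)`-face. -/
def IsPseudomanifold (d : ℕ) (K : Finset (Finset V)) : Prop :=
  IsWeakPseudomanifold d K ∧ ∀ s ∈ K, ∀ t ∈ K, s.card = d + 1 → t.card = d + 1 →
    Relation.ReflTransGen (FacetAdj d K) s t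

/-- A weak pseudomanifold with boundary. -/
def IsWeakPseudomanifoldWithBdry (d : ℕ) (K : Finset (Finset V)) : Prop :=
  IsComplex K ∧ IsPure d K ∧
  (∀ s ∈ K, s.card = d → degOf K d s = 1 ∨ degOf K d s = 2) ∧
  (∃ s ∈ K, s.card = d ∧ degOf K d s = 1)

/-- The boundary complex: all faces of degree-one `(d-1)`-faces. -/
def bdryComplex (d : ℕ) (K : Finset (Finset V)) : Finset (Finset V) :=
  K.filter fun t => ∃ s ∈ K, t ⊆ s ∧ s.card = d ∧ degOf K d s = 1

/-- `K` is connected (any two vertices joined by a path of edges). -/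
def SConnected (K : Finset (Finset V)) : Prop :=
  ∀ u ∈ verts K, ∀ v ∈ verts K,
    Relation.ReflTransGen (fun a b : V => ({a, b} : Finset V) ∈ K) u v

/-! ### Geometric realizations, subdivisions and combinatorial equivalence. -/

/-- A geometric simplicial complex in `ℝ^ℕ`: finitely many geometric simplices
(affinely independent vertex sets), closed under faces, any two of which meet
in a common face. -/
structure GComplex where
  faces : Finset (Finset (ℕ → ℝ))
  nonempty : faces.Nonempty
  empty_not_mem : ∅ ∉ faces
  down_closed : ∀ s ∈ faces, ∀ t : Finset (ℕ → ℝ), t ⊆ s → t.Nonempty → t ∈ faces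
  indep : ∀ s ∈ faces,
    AffineIndependent ℝ (fun x : {y : ℕ → ℝ // y ∈ s} => (x : ℕ → ℝ))
  glue : ∀ s ∈ faces, ∀ t ∈ faces,
    convexHull ℝ (s : Set (ℕ → ℝ)) ∩ convexHull ℝ (t : Set (ℕ → ℝ)) =
      convexHull ℝ ((s ∩ t : Finset (ℕ → ℝ)) : Set (ℕ → ℝ))

/-- The geometric carrier (underlying polyhedron) of a geometric complex. -/
def GComplex.carrier (G : GComplex) : Set (ℕ → ℝ) :=
  ⋃ s ∈ G.faces, convexHull ℝ (s : Set (ℕ → ℝ))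

/-- `G` realizes the abstract complex `K` via the vertex map `f`. -/
def RealizesMap (G : GComplex) (K : Finset (Finset V)) (f : V → ℕ → ℝ) : Prop :=
  Set.InjOn f ↑(verts K) ∧ G.faces = K.image (Finset.image f)

/-- `G` is a geometric realization of the abstract complex `K`. -/
def Realizes (G : GComplex) (K : Finset (Finset V)) : Prop :=
  ∃ f : V → ℕ → ℝ, RealizesMap G K f

/-- `G'` is a subdivision of `G`: same carrier, and every simplex of `G'` is
contained in a simplex of `G`. -/
def Subdivides (G' G : GComplex) : Prop :=
  G'.carrier = G.carrier ∧
  ∀ s ∈ G'.faces, ∃ t ∈ G.faces,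
    convexHull ℝ (s : Set (ℕ → ℝ)) ⊆ convexHull ℝ (t : Set (ℕ → ℝ))

/-- Combinatorial equivalence: `K` and `L` admit isomorphic subdivisions. -/
def CombEquiv (K : Finset (Finset V)) (L : Finset (Finset W)) : Prop :=
  ∃ G1 G1' G2 G2' : GComplex, Realizes G1 K ∧ Realizes G2 L ∧
    Subdivides G1' G1 ∧ Subdivides G2' G2 ∧ Iso G1'.faces G2'.faces

/-- A combinatorial `d`-ball: combinatorially equivalent to the standard ball. -/
def IsCombBall (d : ℕ) (K : Finset (Finset V)) : Prop :=
  ∃ A : Finset ℕ, A.card = d + 1 ∧ CombEquiv K (stdBall A)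

/-- A combinatorial `d`-sphere: combinatorially equivalent to the standard sphere. -/
def IsCombSphere (d : ℕ) (K : Finset (Finset V)) : Prop :=
  ∃ A : Finset ℕ, A.card = d + 2 ∧ CombEquiv K (stdSphere A)

/-- A combinatorial `d`-manifold: every vertex link is a combinatorial
`(d-1)`-sphere. -/
def IsCombManifold (d : ℕ) (K : Finset (Finset V)) : Prop :=
  IsComplex K ∧ ∀ v ∈ verts K, IsCombSphere (d - 1) (link K {v})

/-- A combinatorial `d`-manifold with boundary. -/
def IsCombManifoldWithBdry (d : ℕ) (K : Finset (Finset V)) : Prop :=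
  IsComplex K ∧
  (∀ v ∈ verts K, IsCombSphere (d - 1) (link K {v}) ∨
    IsCombBall (d - 1) (link K {v})) ∧
  (∃ v ∈ verts K, IsCombBall (d - 1) (link K {v}))

/-- A pl `k`-ball: a polyhedron carried by some geometric complex whose face
structure is a combinatorial `k`-ball. -/
def IsPLBall (k : ℕ) (P : Set (ℕ → ℝ)) : Prop :=
  ∃ G : GComplex, G.carrier = P ∧ IsCombBall k G.faces

/-- Elementary polyhedral collapse: `P = P' ∪ B` with `B` a pl `k`-ball and
`P' ∩ B` a pl `(k-1)`-ball. -/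
def PolyElemCollapse (P P' : Set (ℕ → ℝ)) : Prop :=
  ∃ k : ℕ, 1 ≤ k ∧ ∃ B : Set (ℕ → ℝ),
    IsPLBall k B ∧ P = P' ∪ B ∧ IsPLBall (k - 1) (P' ∩ B)

/-- Polyhedral collapse. -/
def PolyCollapsesTo (P Q : Set (ℕ → ℝ)) : Prop :=
  Relation.ReflTransGen PolyElemCollapse P Q

/-- Carrier of a subcomplex under a vertex realization map `f`. -/
def subCarrier (f : V → ℕ → ℝ) (L : Finset (Finset V)) : Set (ℕ → ℝ) :=
  ⋃ s ∈ L, convexHull ℝ ((s.image f : Finset (ℕ → ℝ)) : Set (ℕ → ℝ))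

/-! ### Bistellar moves. -/

/-- The core `β = {x ∈ A : A \ {x} ∈ X}` of a `(d+2)`-set `A`. -/
def bcore (X : Finset (Finset V)) (A : Finset V) : Finset V :=
  A.filter fun x => A.erase x ∈ X

/-- `κ_A` is a bistellar `i`-move on the `d`-dimensional complex `X`:
`A` has `d + 2` elements and contains at least one and at most `d + 1` facets
of `X`; with `β` the core of `A` and `α = A \ β` an `i`-face of `X`, one has
`β ∉ X`, and either `α` is a facet of `X` or `Lk_X(α)` has vertex set `β`. -/
def BistellarIMove (d i : ℕ) (X : Finset (Finset V)) (A : Finset V) : Prop :=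
  A.card = d + 2 ∧
  0 < ((facets X).filter fun σ => σ ⊆ A).card ∧
  ((facets X).filter fun σ => σ ⊆ A).card ≤ d + 1 ∧
  bcore X A ∉ X ∧
  A \ bcore X A ∈ X ∧ (A \ bcore X A).card = i + 1 ∧
  (A \ bcore X A ∈ facets X ∨ verts (link X (A \ bcore X A)) = bcore X A)

/-! ### The explicit small complexes of the paper. -/

/-- The complex generated by a list of facets: all nonempty subsets thereof. -/
def genBy (F : Finset (Finset ℕ)) : Finset (Finset ℕ) :=
  F.sup fun s => s.powerset.erase ∅

/-- The standard 2-sphere `S²₄`. -/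
def S24 : Finset (Finset ℕ) := stdSphere {1, 2, 3, 4}

/-- The join `S¹₃ * S⁰₂`. -/
def S13S02 : Finset (Finset ℕ) := sjoin (stdSphere {1, 2, 3}) (stdSphere {4, 5})

/-- The octahedron `S⁰₂ * S⁰₂ * S⁰₂`. -/
def Octa : Finset (Finset ℕ) :=
  sjoin (stdSphere {1, 2}) (sjoin (stdSphere {3, 4}) (stdSphere {5, 6}))

/-- The 6-vertex real projective plane `ℝP²₆`. -/
def RP26 : Finset (Finset ℕ) :=
  genBy {{1, 2, 3}, {1, 2, 4}, {1, 3, 5}, {1, 4, 6}, {1, 5, 6},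
         {2, 3, 6}, {2, 4, 5}, {2, 5, 6}, {3, 4, 5}, {3, 4, 6}}

/-- `Σ₁`: the 6-vertex 2-sphere with a vertex of degree 3 and one of degree 5. -/
def Sigma1 : Finset (Finset ℕ) :=
  genBy {{1, 2, 5}, {1, 2, 6}, {1, 5, 6}, {2, 3, 5},
         {2, 3, 6}, {3, 4, 5}, {3, 4, 6}, {4, 5, 6}}

/-- The double pyramid `S¹₅ * S⁰₂`. -/
def S15S02 : Finset (Finset ℕ) :=
  sjoin (genBy {{1, 2}, {2, 3}, {3, 4}, {4, 5}, {1, 5}}) (stdSphere {6, 7})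

/-- `Σ₂` (7-vertex 2-sphere with 10 triangles). -/
def Sigma2 : Finset (Finset ℕ) :=
  genBy {{1, 2, 6}, {1, 2, 7}, {1, 6, 7}, {2, 3, 6}, {2, 3, 7},
         {3, 4, 6}, {3, 4, 7}, {4, 5, 6}, {4, 5, 7}, {5, 6, 7}}

/-- `Σ₃` (7-vertex 2-sphere with 10 triangles). -/
def Sigma3 : Finset (Finset ℕ) :=
  genBy {{1, 2, 6}, {1, 2, 7}, {1, 6, 7}, {2, 3, 4}, {2, 3, 7},
         {2, 4, 6}, {3, 4, 7}, {4, 5, 6}, {4, 5, 7}, {5, 6, 7}}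

/-- `Σ₄` (7-vertex 2-sphere with 10 triangles). -/
def Sigma4 : Finset (Finset ℕ) :=
  genBy {{1, 2, 4}, {1, 2, 7}, {1, 4, 5}, {1, 5, 6}, {1, 6, 7},
         {2, 3, 4}, {2, 3, 7}, {3, 4, 7}, {4, 5, 7}, {5, 6, 7}}

/-- `Σ₅` (7-vertex 2-sphere with 10 triangles). -/
def Sigma5 : Finset (Finset ℕ) :=
  genBy {{1, 2, 3}, {1, 2, 6}, {1, 3, 5}, {1, 5, 6}, {2, 3, 4},
         {2, 4, 6}, {3, 4, 5}, {4, 5, 7}, {4, 6, 7}, {5, 6, 7}}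

/-- `Υ₁ = S²₄ ∪ S²₄`: two tetrahedral spheres sharing exactly one vertex. -/
def Upsilon1 : Finset (Finset ℕ) :=
  stdSphere {1, 2, 3, 7} ∪ stdSphere {4, 5, 6, 7}

/-- `Υ₂ = S²₄ ∪ (S⁰₂ * S¹₃)`: a tetrahedral sphere and a join, where the two
common vertices span an edge of the `S²₄`. -/
def Upsilon2 : Finset (Finset ℕ) :=
  stdSphere {4, 5, 6, 7} ∪ sjoin (stdSphere {6, 7}) (stdSphere {1, 2, 3})

/-- The complex `R` obtained from `ℝP²₆` by the generalized bistellar 1-move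
`κ_A`, `A = {1, 2, 5, 6}` (all such choices of `A` yield isomorphic complexes). -/
def Rcomplex : Finset (Finset ℕ) :=
  genBy {{1, 2, 3}, {1, 2, 4}, {1, 2, 5}, {1, 2, 6}, {1, 3, 5},
         {1, 4, 6}, {2, 3, 6}, {2, 4, 5}, {3, 4, 5}, {3, 4, 6}}


/-! ### Auxiliary lemmas: abstract simplicial complexes -/

section Abstract

variable {V : Type*} [DecidableEq V] {W : Type*} [DecidableEq W]

lemma mem_verts_iff {K : Finset (Finset V)} {a : V} :
    a ∈ verts K ↔ ∃ s ∈ K, a ∈ s := by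
  simp [verts, Finset.mem_sup]

lemma subset_verts {K : Finset (Finset V)} {s : Finset V} (hs : s ∈ K) : s ⊆ verts K :=
  fun a ha => mem_verts_iff.2 ⟨s, hs, ha⟩

lemma mem_stdSphere {A s : Finset V} : s ∈ stdSphere A ↔ s.Nonempty ∧ s ⊆ A ∧ s ≠ A := by
  constructor
  · intro h
    simp only [stdSphere, Finset.mem_erase, Finset.mem_powerset] at h
    exact ⟨Finset.nonempty_iff_ne_empty.2 h.2.1, h.2.2, h.1⟩
  · rintro ⟨h1, h2, h3⟩
    simp only [stdSphere, Finset.mem_erase, Finset.mem_powerset]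
    exact ⟨h3, Finset.nonempty_iff_ne_empty.1 h1, h2⟩

lemma verts_stdSphere {A : Finset V} (hA : 2 ≤ A.card) : verts (stdSphere A) = A := by
  apply Finset.Subset.antisymm
  · intro a ha
    rcases mem_verts_iff.1 ha with ⟨s, hs, has⟩
    exact (mem_stdSphere.1 hs).2.1 has
  · intro a ha
    refine mem_verts_iff.2 ⟨{a}, mem_stdSphere.2 ⟨Finset.singleton_nonempty a,
      Finset.singleton_subset_iff.2 ha, ?_⟩, Finset.mem_singleton_self a⟩
    intro h
    rw [← h, Finset.card_singleton] at hA
    omega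

lemma isComplex_stdSphere {A : Finset V} (hA : 2 ≤ A.card) : IsComplex (stdSphere A) := by
  obtain ⟨a, ha⟩ := Finset.card_pos.1 (lt_of_lt_of_le two_pos hA)
  refine ⟨⟨{a}, mem_stdSphere.2 ⟨Finset.singleton_nonempty a,
      Finset.singleton_subset_iff.2 ha, fun h => by rw [← h, Finset.card_singleton] at hA; omega⟩⟩, ?_, ?_⟩
  · intro h
    exact (mem_stdSphere.1 h).1.ne_empty rfl
  · intro s hs t hts htne
    rcases mem_stdSphere.1 hs with ⟨h1, h2, h3⟩
    refine mem_stdSphere.2 ⟨htne, hts.trans h2, ?_⟩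
    rintro rfl
    exact h3 (Finset.Subset.antisymm h2 hts)

lemma mem_sjoin_iff {K L : Finset (Finset V)} {s : Finset V} :
    s ∈ sjoin K L ↔ s ∈ K ∨ s ∈ L ∨ ∃ a ∈ K, ∃ b ∈ L, s = a ∪ b := by
  simp only [sjoin, Finset.mem_union, Finset.mem_image, Finset.mem_product]
  constructor
  · rintro ((h | h) | ⟨⟨a, b⟩, ⟨ha, hb⟩, rfl⟩)
    · exact Or.inl h
    · exact Or.inr (Or.inl h)
    · exact Or.inr (Or.inr ⟨a, ha, b, hb, rfl⟩)
  · rintro (h | h | ⟨a, ha, b, hb, rfl⟩)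
    · exact Or.inl (Or.inl h)
    · exact Or.inl (Or.inr h)
    · exact Or.inr ⟨⟨a, b⟩, ⟨ha, hb⟩, rfl⟩

lemma verts_sjoin {K L : Finset (Finset V)} : verts (sjoin K L) = verts K ∪ verts L := by
  ext a
  simp only [mem_verts_iff, Finset.mem_union]
  constructor
  · rintro ⟨s, hs, has⟩
    rcases mem_sjoin_iff.1 hs with h | h | ⟨u, hu, w, hw, rfl⟩
    · exact Or.inl ⟨s, h, has⟩
    · exact Or.inr ⟨s, h, has⟩
    · rcases Finset.mem_union.1 has with h' | h'
      · exact Or.inl ⟨u, hu, h'⟩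
      · exact Or.inr ⟨w, hw, h'⟩
  · rintro (⟨s, hs, has⟩ | ⟨s, hs, has⟩)
    · exact ⟨s, mem_sjoin_iff.2 (Or.inl hs), has⟩
    · exact ⟨s, mem_sjoin_iff.2 (Or.inr (Or.inl hs)), has⟩

lemma isComplex_sjoin_spheres {V₁ V₂ : Finset V} (h1 : 2 ≤ V₁.card) (h2 : 2 ≤ V₂.card)
    (hd : Disjoint V₁ V₂) : IsComplex (sjoin (stdSphere V₁) (stdSphere V₂)) := by
  have c1 := isComplex_stdSphere h1
  have c2 := isComplex_stdSphere h2
  refine ⟨?_, ?_, ?_⟩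
  · obtain ⟨s, hs⟩ := c1.1
    exact ⟨s, mem_sjoin_iff.2 (Or.inl hs)⟩
  · intro h
    rcases mem_sjoin_iff.1 h with h | h | ⟨a, ha, b, hb, hab⟩
    · exact c1.2.1 h
    · exact c2.2.1 h
    · have : a.Nonempty := (mem_stdSphere.1 ha).1
      rcases this with ⟨x, hx⟩
      have : x ∈ (∅ : Finset V) := hab ▸ Finset.mem_union.2 (Or.inl hx)
      simp at this
  · intro s hs t hts htne
    rcases mem_sjoin_iff.1 hs with h | h | ⟨a, ha, b, hb, rfl⟩
    · exact mem_sjoin_iff.2 (Or.inl (c1.2.2 s h t hts htne))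
    · exact mem_sjoin_iff.2 (Or.inr (Or.inl (c2.2.2 s h t hts htne)))
    · rcases mem_stdSphere.1 ha with ⟨_, ha1, _⟩
      rcases mem_stdSphere.1 hb with ⟨_, hb1, _⟩
      have hta : t ∩ V₁ ⊆ a := by
        intro x hx
        rcases Finset.mem_inter.1 hx with ⟨hxt, hxV⟩
        rcases Finset.mem_union.1 (hts hxt) with h' | h'
        · exact h'
        · exact absurd hxV (Finset.disjoint_right.1 hd (hb1 h'))
      have htb : t ∩ V₂ ⊆ b := by
        intro x hx
        rcases Finset.mem_inter.1 hx with ⟨hxt, hxV⟩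
        rcases Finset.mem_union.1 (hts hxt) with h' | h'
        · exact absurd hxV (Finset.disjoint_left.1 hd (ha1 h'))
        · exact h'
      have hteq : t = (t ∩ V₁) ∪ (t ∩ V₂) := by
        ext x
        simp only [Finset.mem_union, Finset.mem_inter]
        constructor
        · intro hx
          rcases Finset.mem_union.1 (hts hx) with h' | h'
          · exact Or.inl ⟨hx, ha1 h'⟩
          · exact Or.inr ⟨hx, hb1 h'⟩
        · rintro (⟨hx, _⟩ | ⟨hx, _⟩) <;> exact hx
      have m1 : ∀ u : Finset V, u.Nonempty → u ⊆ a → u ∈ stdSphere V₁ :=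
        fun u hu hsub => c1.2.2 a ha u hsub hu
      have m2 : ∀ u : Finset V, u.Nonempty → u ⊆ b → u ∈ stdSphere V₂ :=
        fun u hu hsub => c2.2.2 b hb u hsub hu
      rcases Finset.eq_empty_or_nonempty (t ∩ V₁) with he1 | hne1
      · rw [hteq, he1, Finset.empty_union]
        rw [hteq, he1, Finset.empty_union] at htne
        exact mem_sjoin_iff.2 (Or.inr (Or.inl (m2 _ htne htb)))
      rcases Finset.eq_empty_or_nonempty (t ∩ V₂) with he2 | hne2
      · rw [hteq, he2, Finset.union_empty]
        rw [hteq, he2, Finset.union_empty] at htne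
        exact mem_sjoin_iff.2 (Or.inl (m1 _ hne1 hta))
      · rw [hteq]
        exact mem_sjoin_iff.2 (Or.inr (Or.inr ⟨_, m1 _ hne1 hta, _, m2 _ hne2 htb, rfl⟩))

end Abstract

/-! ### Images, isomorphisms, facets -/

section Images

variable {V : Type*} [DecidableEq V] {W : Type*} [DecidableEq W]

lemma verts_image {K : Finset (Finset V)} {f : V → W} :
    verts (K.image (Finset.image f)) = (verts K).image f := by
  ext a
  constructor
  · intro ha
    rcases mem_verts_iff.1 ha with ⟨s, hs, has⟩
    rcases Finset.mem_image.1 hs with ⟨t, ht, rfl⟩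
    rcases Finset.mem_image.1 has with ⟨b, hb, rfl⟩
    exact Finset.mem_image_of_mem f (subset_verts ht hb)
  · intro ha
    rcases Finset.mem_image.1 ha with ⟨b, hb, rfl⟩
    rcases mem_verts_iff.1 hb with ⟨t, ht, hbt⟩
    exact mem_verts_iff.2 ⟨t.image f, Finset.mem_image_of_mem _ ht,
      Finset.mem_image_of_mem f hbt⟩

lemma image_eq_of_subset_image {A : Finset V} {t : Finset W} {f : V → W} (h : t ⊆ A.image f) :
    t = (A.filter fun a => f a ∈ t).image f := by
  apply Finset.Subset.antisymm
  · intro y hy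
    rcases Finset.mem_image.1 (h hy) with ⟨a, ha, rfl⟩
    exact Finset.mem_image_of_mem f (Finset.mem_filter.2 ⟨ha, hy⟩)
  · intro y hy
    rcases Finset.mem_image.1 hy with ⟨a, ha, rfl⟩
    exact (Finset.mem_filter.1 ha).2

lemma stdSphere_image {A : Finset V} {f : V → W} (hf : Set.InjOn f ↑A) :
    (stdSphere A).image (Finset.image f) = stdSphere (A.image f) := by
  apply Finset.Subset.antisymm
  · intro s hs
    rcases Finset.mem_image.1 hs with ⟨t, ht, rfl⟩
    rcases mem_stdSphere.1 ht with ⟨h1, h2, h3⟩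
    refine mem_stdSphere.2 ⟨h1.image f, Finset.image_subset_image h2, ?_⟩
    intro heq
    apply h3
    apply Finset.Subset.antisymm h2
    intro a ha
    have : f a ∈ t.image f := heq ▸ Finset.mem_image_of_mem f ha
    rcases Finset.mem_image.1 this with ⟨b, hb, hba⟩
    rwa [← hf (h2 hb) ha hba]
  · intro s hs
    rcases mem_stdSphere.1 hs with ⟨h1, h2, h3⟩
    set t := A.filter fun a => f a ∈ s with ht
    have hts : s = t.image f := image_eq_of_subset_image h2
    refine Finset.mem_image.2 ⟨t, mem_stdSphere.2 ⟨?_, Finset.filter_subset _ _, ?_⟩, hts.symm⟩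
    · rcases h1 with ⟨y, hy⟩
      rcases Finset.mem_image.1 (h2 hy) with ⟨a, ha, rfl⟩
      exact ⟨a, Finset.mem_filter.2 ⟨ha, hy⟩⟩
    · intro heq
      apply h3
      rw [hts, heq]
  
lemma sjoin_image {K L : Finset (Finset V)} {f : V → W} :
    (sjoin K L).image (Finset.image f) =
      sjoin (K.image (Finset.image f)) (L.image (Finset.image f)) := by
  ext s
  constructor
  · intro h
    rcases Finset.mem_image.1 h with ⟨t, ht, rfl⟩
    rcases mem_sjoin_iff.1 ht with h' | h' | ⟨a, ha, b, hb, rfl⟩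
    · exact mem_sjoin_iff.2 (Or.inl (Finset.mem_image_of_mem _ h'))
    · exact mem_sjoin_iff.2 (Or.inr (Or.inl (Finset.mem_image_of_mem _ h')))
    · exact mem_sjoin_iff.2 (Or.inr (Or.inr ⟨a.image f, Finset.mem_image_of_mem _ ha,
        b.image f, Finset.mem_image_of_mem _ hb, Finset.image_union a b⟩))
  · intro h
    rcases mem_sjoin_iff.1 h with h' | h' | ⟨a, ha, b, hb, rfl⟩
    · rcases Finset.mem_image.1 h' with ⟨t, ht, rfl⟩
      exact Finset.mem_image_of_mem _ (mem_sjoin_iff.2 (Or.inl ht))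
    · rcases Finset.mem_image.1 h' with ⟨t, ht, rfl⟩
      exact Finset.mem_image_of_mem _ (mem_sjoin_iff.2 (Or.inr (Or.inl ht)))
    · rcases Finset.mem_image.1 ha with ⟨a', ha', rfl⟩
      rcases Finset.mem_image.1 hb with ⟨b', hb', rfl⟩
      rw [← Finset.image_union a' b']
      exact Finset.mem_image_of_mem _ (mem_sjoin_iff.2 (Or.inr (Or.inr ⟨a', ha', b', hb', rfl⟩)))

lemma realizes_of_iso {K : Finset (Finset V)} {L : Finset (Finset W)} {G : GComplex}
    (hI : Iso K L) (hR : Realizes G L) : Realizes G K := by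
  rcases hI with ⟨f, hf, hKL⟩
  rcases hR with ⟨g, hg, hfaces⟩
  refine ⟨g ∘ f, ?_, ?_⟩
  · have hv : verts L = (verts K).image f := by rw [hKL, verts_image]
    intro a ha b hb hab
    apply hf ha hb
    apply hg (by rw [hv]; exact Finset.mem_coe.2 (Finset.mem_image_of_mem f ha))
      (by rw [hv]; exact Finset.mem_coe.2 (Finset.mem_image_of_mem f hb)) hab
  · rw [hfaces, hKL, Finset.image_image]
    apply Finset.image_congr
    intro s _
    simp [Finset.image_image]

lemma subdivides_refl (G : GComplex) : Subdivides G G :=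
  ⟨rfl, fun s hs => ⟨s, hs, subset_rfl⟩⟩

lemma iso_refl (K : Finset (Finset W)) : Iso K K := by
  refine ⟨id, Set.injOn_id _, ?_⟩
  have : ∀ s ∈ K, Finset.image (id : W → W) s = id s := fun s _ => Finset.image_id
  rw [Finset.image_congr this, Finset.image_id]

lemma combEquiv_of_iso {K : Finset (Finset V)} {L : Finset (Finset W)} {G : GComplex}
    (hI : Iso K L) (hR : Realizes G L) : CombEquiv K L :=
  ⟨G, G, G, G, realizes_of_iso hI hR, hR, subdivides_refl G, subdivides_refl G,
    iso_refl G.faces⟩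

lemma exists_facet {K : Finset (Finset V)} {s : Finset V} (hs : s ∈ K) :
    ∃ F ∈ facets K, s ⊆ F := by
  obtain ⟨F, hF, hmax⟩ := Finset.exists_max_image (K.filter fun t => s ⊆ t) Finset.card
    ⟨s, Finset.mem_filter.2 ⟨hs, subset_rfl⟩⟩
  rcases Finset.mem_filter.1 hF with ⟨hFK, hsF⟩
  refine ⟨F, Finset.mem_filter.2 ⟨hFK, ?_⟩, hsF⟩
  intro t ht hFt
  exact (Finset.eq_of_subset_of_card_le hFt
    (hmax t (Finset.mem_filter.2 ⟨ht, hsF.trans hFt⟩))).symm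

end Images

/-! ### Geometry: points and hulls -/

section HullDefs

/-- `i`-th standard basis vector of `ℝ^ℕ`. -/
def bvec (i : ℕ) : ℕ → ℝ := fun j => if j = i then 1 else 0

/-- Barycenter of the basis vectors indexed by `τ`. -/
def bary (τ : Finset ℕ) : ℕ → ℝ := fun j => if j ∈ τ then (τ.card : ℝ)⁻¹ else 0

/-- Vertex map sending `6` to the barycenter of `τ` and `i ≠ 6` to `bvec i`. -/
def qmap (τ : Finset ℕ) : ℕ → (ℕ → ℝ) := fun i => if i = 6 then bary τ else bvec i

def hullA (S : Finset ℕ) : Set (ℕ → ℝ) :=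
  {x | (∀ i, 0 ≤ x i) ∧ (∀ i, i ∉ S → x i = 0) ∧ ∑ i ∈ S, x i = 1}

def hullB (τ ρ μ : Finset ℕ) : Set (ℕ → ℝ) :=
  {x | (∀ i, 0 ≤ x i) ∧ (∀ i, i ∉ τ ∪ μ → x i = 0) ∧ (∑ i ∈ τ ∪ μ, x i = 1) ∧
    ∃ c : ℝ, (∀ j ∈ τ \ ρ, x j = c) ∧ ∀ i ∈ ρ, c ≤ x i}

lemma bvec_injective : Function.Injective bvec := by
  intro i j h
  by_contra hne
  have := congrFun h i
  simp only [bvec, if_pos rfl] at this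
  rw [if_neg hne] at this
  norm_num at this

lemma bvec_ne_bary {τ : Finset ℕ} (hτ2 : 2 ≤ τ.card) (i : ℕ) : bvec i ≠ bary τ := by
  intro h
  have := congrFun h i
  simp only [bvec, bary, if_pos rfl] at this
  by_cases hi : i ∈ τ
  · rw [if_pos hi] at this
    have hc : (τ.card : ℝ) = 1 := by
      rw [← inv_eq_one]
      exact this.symm
    have : τ.card = 1 := by exact_mod_cast hc
    omega
  · rw [if_neg hi] at this
    norm_num at this

lemma bary_nonneg (τ : Finset ℕ) (j : ℕ) : 0 ≤ bary τ j := by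
  unfold bary
  split
  · positivity
  · exact le_refl 0

lemma qmap_injOn {τ : Finset ℕ} (hτ2 : 2 ≤ τ.card) :
    Set.InjOn (qmap τ) ↑(Finset.range 7) := by
  intro i _ j _ h
  unfold qmap at h
  by_cases hi : i = 6 <;> by_cases hj : j = 6
  · rw [hi, hj]
  · rw [if_pos hi, if_neg hj] at h
    exact absurd h.symm (bvec_ne_bary hτ2 j)
  · rw [if_neg hi, if_pos hj] at h
    exact absurd h (bvec_ne_bary hτ2 i)
  · rw [if_neg hi, if_neg hj] at h
    exact bvec_injective h

lemma sum_of_support {x : ℕ → ℝ} {A B : Finset ℕ} (hA : ∀ i, i ∉ A → x i = 0) :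
    ∑ i ∈ B, x i = ∑ i ∈ A ∩ B, x i := by
  refine (Finset.sum_subset Finset.inter_subset_right ?_).symm
  intro i hiB hin
  exact hA i (fun hiA => hin (Finset.mem_inter.2 ⟨hiA, hiB⟩))

lemma sum_eq_sum {x : ℕ → ℝ} {A B : Finset ℕ} (hA : ∀ i, i ∉ A → x i = 0)
    (hB : ∀ i, i ∉ B → x i = 0) : ∑ i ∈ A, x i = ∑ i ∈ B, x i := by
  rw [sum_of_support hB (B := A), sum_of_support hA (B := B), Finset.inter_comm]

lemma hullA_eq (S : Finset ℕ) : convexHull ℝ ↑(S.image bvec) = hullA S := by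
  apply Set.Subset.antisymm
  · apply convexHull_min
    · intro z hz
      rcases Finset.mem_image.1 (Finset.mem_coe.1 hz) with ⟨i, hi, rfl⟩
      refine ⟨fun j => by unfold bvec; split <;> norm_num, fun j hj => ?_, ?_⟩
      · unfold bvec
        rw [if_neg]
        rintro rfl
        exact hj hi
      · simp only [bvec]
        rw [Finset.sum_ite_eq' S i (fun _ => (1:ℝ)), if_pos hi]
    · rintro x ⟨hx0, hxz, hxs⟩ y ⟨hy0, hyz, hys⟩ a b ha hb hab
      refine ⟨fun i => ?_, fun i hi => ?_, ?_⟩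
      · simp only [Pi.add_apply, Pi.smul_apply, smul_eq_mul]
        exact add_nonneg (mul_nonneg ha (hx0 i)) (mul_nonneg hb (hy0 i))
      · simp only [Pi.add_apply, Pi.smul_apply, smul_eq_mul, hxz i hi, hyz i hi]
        ring
      · simp only [Pi.add_apply, Pi.smul_apply, smul_eq_mul]
        rw [Finset.sum_add_distrib, ← Finset.mul_sum, ← Finset.mul_sum, hxs, hys]
        linarith
  · rintro x ⟨h0, hz, hs⟩
    have hmem := Finset.centerMass_mem_convexHull (t := S) (w := x) (z := bvec)
      (fun i _ => h0 i) (by rw [hs]; norm_num)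
      (fun i hi => Finset.mem_coe.2 (Finset.mem_image_of_mem _ hi))
    rwa [Finset.centerMass_eq_of_sum_1 _ _ hs, show ∑ i ∈ S, x i • bvec i = x from ?_] at hmem
    funext j
    rw [Finset.sum_apply]
    simp only [Pi.smul_apply, smul_eq_mul, bvec, mul_ite, mul_one, mul_zero]
    rw [Finset.sum_ite_eq S j (fun i => x i)]
    by_cases hj : j ∈ S
    · rw [if_pos hj]
    · rw [if_neg hj, hz j hj]

end HullDefs

section HullB

lemma hullB_eq {τ ρ μ : Finset ℕ} (hτ2 : 2 ≤ τ.card) (hρ : ρ ⊆ τ) (hρne : ρ ≠ τ)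
    (hμ : Disjoint μ τ) (hτ6 : τ ⊆ Finset.range 6) (hμ6 : μ ⊆ Finset.range 6) :
    convexHull ℝ ↑(insert (bary τ) ((ρ ∪ μ).image bvec)) = hullB τ ρ μ := by
  have hcτ : (τ.card : ℝ) ≠ 0 := by
    have : 0 < τ.card := by omega
    exact_mod_cast this.ne'
  obtain ⟨j₀, hj₀τ, hj₀ρ⟩ := Finset.exists_of_ssubset (lt_of_le_of_ne hρ hρne)
  apply Set.Subset.antisymm
  · apply convexHull_min
    · intro z hz
      rcases Finset.mem_insert.1 (Finset.mem_coe.1 hz) with rfl | hz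
      · refine ⟨bary_nonneg τ, fun i hi => ?_, ?_, (τ.card : ℝ)⁻¹, fun j hj => ?_,
          fun i hi => ?_⟩
        · unfold bary
          rw [if_neg (fun h => hi (Finset.mem_union_left μ h))]
        · rw [← Finset.sum_subset (Finset.subset_union_left (s₁ := τ) (s₂ := μ))
            (fun i _ hit => by unfold bary; rw [if_neg hit])]
          simp only [bary]
          rw [Finset.sum_congr rfl (fun i hi => if_pos hi), Finset.sum_const,
            nsmul_eq_mul, mul_inv_cancel₀ hcτ]
        · unfold bary; rw [if_pos (Finset.mem_sdiff.1 hj).1]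
        · unfold bary; rw [if_pos (hρ hi)]
      · rcases Finset.mem_image.1 hz with ⟨k, hk, rfl⟩
        refine ⟨fun j => by unfold bvec; split <;> norm_num, fun i hi => ?_, ?_, 0,
          fun j hj => ?_, fun i _ => by unfold bvec; split <;> norm_num⟩
        · unfold bvec
          rw [if_neg]
          rintro rfl
          rcases Finset.mem_union.1 hk with h | h
          · exact hi (Finset.mem_union_left μ (hρ h))
          · exact hi (Finset.mem_union_right τ h)
        · simp only [bvec]
          rw [Finset.sum_ite_eq' _ k (fun _ => (1:ℝ)), if_pos]
          rcases Finset.mem_union.1 hk with h | h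
          · exact Finset.mem_union_left μ (hρ h)
          · exact Finset.mem_union_right τ h
        · rcases Finset.mem_sdiff.1 hj with ⟨hjτ, hjρ⟩
          unfold bvec
          rw [if_neg]
          rintro rfl
          rcases Finset.mem_union.1 hk with h | h
          · exact hjρ h
          · exact (Finset.disjoint_left.1 hμ h) hjτ
    · rintro x ⟨hx0, hxz, hxs, cx, hcx1, hcx2⟩ y ⟨hy0, hyz, hys, cy, hcy1, hcy2⟩ a b ha hb hab
      refine ⟨fun i => ?_, fun i hi => ?_, ?_, a * cx + b * cy, fun j hj => ?_, fun i hi => ?_⟩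
      · simp only [Pi.add_apply, Pi.smul_apply, smul_eq_mul]
        exact add_nonneg (mul_nonneg ha (hx0 i)) (mul_nonneg hb (hy0 i))
      · simp only [Pi.add_apply, Pi.smul_apply, smul_eq_mul, hxz i hi, hyz i hi]; ring
      · simp only [Pi.add_apply, Pi.smul_apply, smul_eq_mul]
        rw [Finset.sum_add_distrib, ← Finset.mul_sum, ← Finset.mul_sum, hxs, hys]
        linarith
      · simp only [Pi.add_apply, Pi.smul_apply, smul_eq_mul, hcx1 j hj, hcy1 j hj]
      · simp only [Pi.add_apply, Pi.smul_apply, smul_eq_mul]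
        exact add_le_add (mul_le_mul_of_nonneg_left (hcx2 i hi) ha)
          (mul_le_mul_of_nonneg_left (hcy2 i hi) hb)
  · rintro x ⟨h0, hz, hs, c, hc1, hc2⟩
    have hc0 : 0 ≤ c := by
      rw [← hc1 j₀ (Finset.mem_sdiff.2 ⟨hj₀τ, hj₀ρ⟩)]
      exact h0 j₀
    have h6ρμ : 6 ∉ ρ ∪ μ := by
      intro h
      rcases Finset.mem_union.1 h with h | h
      · exact absurd (Finset.mem_range.1 (hτ6 (hρ h))) (by omega)
      · exact absurd (Finset.mem_range.1 (hμ6 h)) (by omega)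
    set t : Finset ℕ := insert 6 (ρ ∪ μ) with htdef
    set w : ℕ → ℝ := fun i => if i = 6 then (τ.card : ℝ) * c
      else x i - (if i ∈ ρ then c else 0) with hwdef
    have hw0 : ∀ i ∈ t, 0 ≤ w i := by
      intro i hi
      rcases Finset.mem_insert.1 hi with rfl | hi
      · simp only [hwdef, if_pos rfl]
        positivity
      · have hi6 : i ≠ 6 := fun h => h6ρμ (h ▸ hi)
        simp only [hwdef, if_neg hi6]
        by_cases hiρ : i ∈ ρ
        · rw [if_pos hiρ]
          linarith [hc2 i hiρ]
        · rw [if_neg hiρ]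
          simpa using h0 i
    have hcover : τ ∪ μ = (ρ ∪ μ) ∪ (τ \ ρ) := by
      ext i
      simp only [Finset.mem_union, Finset.mem_sdiff]
      by_cases h : i ∈ ρ
      · have := hρ h; tauto
      · tauto
    have hdisj2 : Disjoint (ρ ∪ μ) (τ \ ρ) := by
      rw [Finset.disjoint_union_left]
      constructor
      · exact Finset.disjoint_sdiff
      · exact hμ.mono_right (Finset.sdiff_subset)
    have hsum_split : ∑ i ∈ ρ ∪ μ, x i + ∑ i ∈ τ \ ρ, x i = 1 := by
      rw [← Finset.sum_union hdisj2, ← hcover, hs]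
    have hsdρ : ∑ i ∈ τ \ ρ, x i = ((τ.card - ρ.card : ℕ) : ℝ) * c := by
      rw [Finset.sum_congr rfl (fun j hj => hc1 j hj), Finset.sum_const, nsmul_eq_mul,
        Finset.card_sdiff_of_subset hρ]
    have hsite : ∑ i ∈ ρ ∪ μ, (if i ∈ ρ then c else 0) = (ρ.card : ℝ) * c := by
      rw [Finset.sum_ite_mem, Finset.inter_eq_right.2 Finset.subset_union_left,
        Finset.sum_const, nsmul_eq_mul]
    have hcast : ((τ.card - ρ.card : ℕ) : ℝ) = (τ.card : ℝ) - (ρ.card : ℝ) :=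
      Nat.cast_sub (Finset.card_le_card hρ)
    have hwsum : ∑ i ∈ t, w i = 1 := by
      rw [htdef, Finset.sum_insert h6ρμ]
      simp only [hwdef, if_pos rfl]
      rw [Finset.sum_congr rfl (fun i hi => by
        rw [if_neg (show i ≠ 6 from fun h => h6ρμ (h ▸ hi))])]
      rw [Finset.sum_sub_distrib, hsite]
      rw [hsdρ, hcast] at hsum_split
      linarith
    have hmem := Finset.centerMass_mem_convexHull (t := t) (w := w) (z := qmap τ)
      (s := ↑(insert (bary τ) ((ρ ∪ μ).image bvec))) hw0
      (by rw [hwsum]; norm_num) (fun i hi => ?_)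
    · rwa [Finset.centerMass_eq_of_sum_1 _ _ hwsum,
        show ∑ i ∈ t, w i • qmap τ i = x from ?_] at hmem
      funext m
      rw [Finset.sum_apply, htdef, Finset.sum_insert h6ρμ]
      simp only [Pi.smul_apply, smul_eq_mul]
      have hq6 : qmap τ 6 = bary τ := by unfold qmap; rw [if_pos rfl]
      have hterm : ∀ i ∈ ρ ∪ μ, w i * qmap τ i m =
          (if m = i then w i else 0) := by
        intro i hi
        have hi6 : i ≠ 6 := fun h => h6ρμ (h ▸ hi)
        unfold qmap bvec
        rw [if_neg hi6]
        by_cases hmi : m = i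
        · rw [if_pos hmi, if_pos hmi, mul_one]
        · rw [if_neg hmi, if_neg hmi, mul_zero]
      rw [Finset.sum_congr rfl hterm, Finset.sum_ite_eq (ρ ∪ μ) m w, hq6]
      simp only [hwdef, if_pos rfl, bary]
      by_cases hmτ : m ∈ τ
      · rw [if_pos hmτ]
        have hbt : (τ.card : ℝ) * c * (τ.card : ℝ)⁻¹ = c := by
          field_simp
        by_cases hmρ : m ∈ ρ
        · have hm' : m ∈ ρ ∪ μ := Finset.mem_union_left μ hmρ
          rw [if_pos hm', if_neg (show m ≠ 6 from fun h =>
            h6ρμ (h ▸ hm')), if_pos hmρ, hbt]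
          ring
        · have hm' : m ∉ ρ ∪ μ := by
            intro h
            rcases Finset.mem_union.1 h with h | h
            · exact hmρ h
            · exact (Finset.disjoint_left.1 hμ h) hmτ
          rw [if_neg hm', hbt, hc1 m (Finset.mem_sdiff.2 ⟨hmτ, hmρ⟩)]
          ring
      · rw [if_neg hmτ, mul_zero]
        by_cases hm' : m ∈ ρ ∪ μ
        · have hm6 : m ≠ 6 := fun h => h6ρμ (h ▸ hm')
          have hmρ : m ∉ ρ := fun h => hmτ (hρ h)
          rw [if_pos hm', if_neg hm6, if_neg hmρ]
          ring
        · rw [if_neg hm', hz m (by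
            intro h
            rcases Finset.mem_union.1 h with h | h
            · exact hmτ h
            · exact hm' (Finset.mem_union_right ρ h))]
          ring
    · rcases Finset.mem_insert.1 hi with h6 | hmem
      · have : qmap τ i = bary τ := by unfold qmap; rw [if_pos h6]
        rw [this]
        exact Finset.mem_coe.2 (Finset.mem_insert_self _ _)
      · have hi6 : i ≠ 6 := fun h => h6ρμ (h ▸ hmem)
        have : qmap τ i = bvec i := by unfold qmap; rw [if_neg hi6]
        rw [this]
        exact Finset.mem_coe.2 (Finset.mem_insert_of_mem (Finset.mem_image_of_mem _ hmem))

end HullB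

section HullInter

lemma not_mem_inter_cases {i : ℕ} {S S' : Finset ℕ} (hi : i ∉ S ∩ S') : i ∉ S ∨ i ∉ S' := by
  by_cases h : i ∈ S
  · exact Or.inr (fun h' => hi (Finset.mem_inter.2 ⟨h, h'⟩))
  · exact Or.inl h

lemma hullA_subset {S₀ S : Finset ℕ} (h : S₀ ⊆ S) : hullA S₀ ⊆ hullA S := by
  rintro x ⟨h0, hz, hs⟩
  refine ⟨h0, fun i hi => hz i (fun h' => hi (h h')), ?_⟩
  rw [← hs]
  exact (Finset.sum_subset h (fun i _ hi => hz i hi)).symm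

lemma hullA_inter (S S' : Finset ℕ) : hullA S ∩ hullA S' = hullA (S ∩ S') := by
  apply Set.Subset.antisymm
  · rintro x ⟨⟨h0, hz, hs⟩, ⟨h0', hz', hs'⟩⟩
    have hzz : ∀ i, i ∉ S ∩ S' → x i = 0 := by
      intro i hi
      rcases not_mem_inter_cases hi with h | h
      · exact hz i h
      · exact hz' i h
    exact ⟨h0, hzz, by rw [sum_eq_sum hzz hz]; exact hs⟩
  · intro x hx
    exact ⟨hullA_subset Finset.inter_subset_left hx, hullA_subset Finset.inter_subset_right hx⟩

lemma hullB_subset {τ ρ₀ μ₀ ρ μ : Finset ℕ} (hρ₀ : ρ₀ ⊆ ρ) (hμ₀ : μ₀ ⊆ μ) (hρτ : ρ ⊆ τ) :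
    hullB τ ρ₀ μ₀ ⊆ hullB τ ρ μ := by
  rintro x ⟨h0, hz, hs, c, hc1, hc2⟩
  have hsub : τ ∪ μ₀ ⊆ τ ∪ μ := Finset.union_subset_union_right hμ₀
  refine ⟨h0, fun i hi => hz i (fun h' => hi (hsub h')), ?_, c, ?_, ?_⟩
  · rw [← hs]
    exact (Finset.sum_subset hsub (fun i _ hi => hz i hi)).symm
  · intro j hj
    rcases Finset.mem_sdiff.1 hj with ⟨hjτ, hjρ⟩
    exact hc1 j (Finset.mem_sdiff.2 ⟨hjτ, fun h => hjρ (hρ₀ h)⟩)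
  · intro i hi
    by_cases hi0 : i ∈ ρ₀
    · exact hc2 i hi0
    · exact le_of_eq (hc1 i (Finset.mem_sdiff.2 ⟨hρτ hi, hi0⟩)).symm

lemma hullB_inter {τ ρ μ ρ' μ' : Finset ℕ} (hρ : ρ ⊆ τ) (hρne : ρ ≠ τ)
    (hρ' : ρ' ⊆ τ) (hρ'ne : ρ' ≠ τ) (hμ : Disjoint μ τ) (hμ' : Disjoint μ' τ) :
    hullB τ ρ μ ∩ hullB τ ρ' μ' = hullB τ (ρ ∩ ρ') (μ ∩ μ') := by
  apply Set.Subset.antisymm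
  · rintro x ⟨⟨h0, hz, hs, c, hc1, hc2⟩, ⟨h0', hz', hs', c', hc1', hc2'⟩⟩
    obtain ⟨j₁, hj₁τ, hj₁ρ⟩ := Finset.exists_of_ssubset (lt_of_le_of_ne hρ hρne)
    obtain ⟨j₂, hj₂τ, hj₂ρ'⟩ := Finset.exists_of_ssubset (lt_of_le_of_ne hρ' hρ'ne)
    have hcc : c = c' := by
      by_cases hint : ∃ j ∈ τ, j ∉ ρ ∧ j ∉ ρ'
      · obtain ⟨j, hjτ, hjρ, hjρ'⟩ := hint
        rw [← hc1 j (Finset.mem_sdiff.2 ⟨hjτ, hjρ⟩), hc1' j (Finset.mem_sdiff.2 ⟨hjτ, hjρ'⟩)]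
      · push_neg at hint
        have h1 : c ≥ c' := by
          rw [← hc1 j₁ (Finset.mem_sdiff.2 ⟨hj₁τ, hj₁ρ⟩)]
          exact hc2' j₁ (hint j₁ hj₁τ hj₁ρ)
        have h2 : c' ≥ c := by
          rw [← hc1' j₂ (Finset.mem_sdiff.2 ⟨hj₂τ, hj₂ρ'⟩)]
          apply hc2 j₂
          by_contra hj₂ρ
          exact hj₂ρ' (hint j₂ hj₂τ hj₂ρ)
        linarith
    have hzz : ∀ i, i ∉ τ ∪ (μ ∩ μ') → x i = 0 := by
      intro i hi
      have hiτ : i ∉ τ := fun h => hi (Finset.mem_union_left _ h)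
      rcases not_mem_inter_cases (fun h => hi (Finset.mem_union_right _ h)) with h | h
      · apply hz i
        intro h'
        rcases Finset.mem_union.1 h' with h'' | h''
        · exact hiτ h''
        · exact h h''
      · apply hz' i
        intro h'
        rcases Finset.mem_union.1 h' with h'' | h''
        · exact hiτ h''
        · exact h h''
    refine ⟨h0, hzz, by rw [sum_eq_sum hzz hz]; exact hs, c, ?_, ?_⟩
    · intro j hj
      rcases Finset.mem_sdiff.1 hj with ⟨hjτ, hjρρ'⟩
      rcases not_mem_inter_cases hjρρ' with h | h
      · exact hc1 j (Finset.mem_sdiff.2 ⟨hjτ, h⟩)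
      · rw [hcc]
        exact hc1' j (Finset.mem_sdiff.2 ⟨hjτ, h⟩)
    · intro i hi
      exact hc2 i (Finset.mem_inter.1 hi).1
  · intro x hx
    exact ⟨hullB_subset Finset.inter_subset_left Finset.inter_subset_left hρ hx,
      hullB_subset Finset.inter_subset_right Finset.inter_subset_right hρ' hx⟩

lemma hullAB_inter {τ ρ μ S : Finset ℕ} (hρ : ρ ⊆ τ) (hρne : ρ ≠ τ) (hμ : Disjoint μ τ)
    (hτS : ¬ τ ⊆ S) : hullA S ∩ hullB τ ρ μ = hullA (S ∩ (ρ ∪ μ)) := by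
  obtain ⟨j₀, hj₀τ, hj₀ρ⟩ := Finset.exists_of_ssubset (lt_of_le_of_ne hρ hρne)
  apply Set.Subset.antisymm
  · rintro x ⟨⟨h0, hzS, hsS⟩, ⟨h0', hzB, hsB, c, hc1, hc2⟩⟩
    obtain ⟨jS, hjSτ, hjSS⟩ : ∃ j ∈ τ, j ∉ S := by
      by_contra h
      push_neg at h
      exact hτS h
    have hc0 : (0:ℝ) ≤ c := by
      rw [← hc1 j₀ (Finset.mem_sdiff.2 ⟨hj₀τ, hj₀ρ⟩)]
      exact h0 j₀
    have hceq : c = 0 := by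
      by_cases hjSρ : jS ∈ ρ
      · have := hc2 jS hjSρ
        rw [hzS jS hjSS] at this
        linarith
      · rw [← hc1 jS (Finset.mem_sdiff.2 ⟨hjSτ, hjSρ⟩)]
        exact hzS jS hjSS
    have hzz : ∀ i, i ∉ S ∩ (ρ ∪ μ) → x i = 0 := by
      intro i hi
      rcases not_mem_inter_cases hi with h | h
      · exact hzS i h
      · by_cases hiτ : i ∈ τ
        · have hiρ : i ∉ ρ := fun h' => h (Finset.mem_union_left _ h')
          rw [hc1 i (Finset.mem_sdiff.2 ⟨hiτ, hiρ⟩), hceq]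
        · refine hzB i (fun h' => ?_)
          rcases Finset.mem_union.1 h' with h'' | h''
          · exact hiτ h''
          · exact h (Finset.mem_union_right _ h'')
    exact ⟨h0, hzz, by rw [sum_eq_sum hzz hzS]; exact hsS⟩
  · intro x hx
    have hx2 := hx
    obtain ⟨h0, hz, hs⟩ := hx2
    refine ⟨hullA_subset Finset.inter_subset_left hx, h0, ?_, ?_, 0, ?_, ?_⟩
    · intro i hi
      refine hz i (fun h' => ?_)
      rcases Finset.mem_inter.1 h' with ⟨-, h''⟩
      rcases Finset.mem_union.1 h'' with h3 | h3
      · exact hi (Finset.mem_union_left _ (hρ h3))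
      · exact hi (Finset.mem_union_right _ h3)
    · rw [sum_eq_sum (A := τ ∪ μ) (B := S ∩ (ρ ∪ μ)) ?_ hz]
      · exact hs
      · intro i hi
        refine hz i (fun h' => ?_)
        rcases Finset.mem_inter.1 h' with ⟨-, h''⟩
        rcases Finset.mem_union.1 h'' with h3 | h3
        · exact hi (Finset.mem_union_left _ (hρ h3))
        · exact hi (Finset.mem_union_right _ h3)
    · intro j hj
      rcases Finset.mem_sdiff.1 hj with ⟨hjτ, hjρ⟩
      refine hz j (fun h' => ?_)
      rcases Finset.mem_inter.1 h' with ⟨-, h''⟩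
      rcases Finset.mem_union.1 h'' with h3 | h3
      · exact hjρ h3
      · exact (Finset.disjoint_left.1 hμ h3) hjτ
    · intro i _
      exact h0 i

end HullInter

section Indep

lemma affine_of_linear {ι : Type*} (p : ι → (ℕ → ℝ))
    (h : ∀ (s : Finset ι) (g : ι → ℝ), ∑ i ∈ s, g i • p i = 0 → ∀ i ∈ s, g i = 0) :
    AffineIndependent ℝ p :=
  affineIndependent_iff.2 (fun s w _ hw => h s w hw)

lemma face_indep {τ : Finset ℕ} (hτ2 : 2 ≤ τ.card) (F : Finset (ℕ → ℝ)) (J : Finset ℕ)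
    (hJ : ∀ z ∈ F, z = bary τ ∨ ∃ j ∈ J, z = bvec j)
    (hbary : bary τ ∈ F → ∃ j₀ ∈ τ, j₀ ∉ J) :
    AffineIndependent ℝ (fun x : {y : ℕ → ℝ // y ∈ F} => (x : ℕ → ℝ)) := by
  have hcτ : (τ.card : ℝ) ≠ 0 := by
    have : 0 < τ.card := by omega
    exact_mod_cast this.ne'
  apply affine_of_linear
  intro s g hsum
  have heval : ∀ m : ℕ, ∑ i ∈ s, g i * ((i : ℕ → ℝ) m) = 0 := by
    intro m
    have := congrFun hsum m
    rw [Finset.sum_apply] at this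
    simpa using this
  have hgbary : ∀ a ∈ s, (a : ℕ → ℝ) = bary τ → g a = 0 := by
    intro a ha hval
    obtain ⟨j₀, hj₀τ, hj₀J⟩ := hbary (hval ▸ a.2)
    have hrest : ∀ b ∈ s, b ≠ a → g b * ((b : ℕ → ℝ) j₀) = 0 := by
      intro b hb hba
      rcases hJ (b : ℕ → ℝ) b.2 with h | ⟨j, hjJ, h⟩
      · exact absurd (Subtype.ext (h.trans hval.symm)) hba
      · rw [h]
        have : bvec j j₀ = 0 := by
          unfold bvec
          rw [if_neg]
          rintro rfl
          exact hj₀J hjJ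
        rw [this, mul_zero]
    have := heval j₀
    rw [Finset.sum_eq_single_of_mem a ha hrest, hval] at this
    have hbval : bary τ j₀ = (τ.card : ℝ)⁻¹ := by unfold bary; rw [if_pos hj₀τ]
    rw [hbval] at this
    exact (mul_eq_zero.1 this).resolve_right (inv_ne_zero hcτ)
  have hgbv : ∀ a ∈ s, ∀ j ∈ J, (a : ℕ → ℝ) = bvec j → g a = 0 := by
    intro a ha j hjJ hval
    have hrest : ∀ b ∈ s, b ≠ a → g b * ((b : ℕ → ℝ) j) = 0 := by
      intro b hb hba
      rcases hJ (b : ℕ → ℝ) b.2 with h | ⟨j', hj'J, h⟩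
      · rw [hgbary b hb h, zero_mul]
      · by_cases hjj : j' = j
        · exact absurd (Subtype.ext (h.trans (hjj ▸ hval.symm))) hba
        · rw [h]
          have : bvec j' j = 0 := by
            unfold bvec
            rw [if_neg (fun hh => hjj hh.symm)]
          rw [this, mul_zero]
    have := heval j
    rw [Finset.sum_eq_single_of_mem a ha hrest, hval] at this
    have : g a * 1 = 0 := by
      rwa [show bvec j j = 1 from by unfold bvec; rw [if_pos rfl]] at this
    rwa [mul_one] at this
  intro a ha
  rcases hJ (a : ℕ → ℝ) a.2 with h | ⟨j, hjJ, h⟩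
  · exact hgbary a ha h
  · exact hgbv a ha j hjJ h

end Indep

section StarComplex

/-- The vertex set `(range 6 \ τ) ∪ {6}` complementary to `τ`. -/
def U1 (τ : Finset ℕ) : Finset ℕ := (Finset.range 6 \ τ) ∪ {6}

/-- The join of the standard spheres on `U1 τ` and on `τ`. -/
def starJ (τ : Finset ℕ) : Finset (Finset ℕ) := sjoin (stdSphere (U1 τ)) (stdSphere τ)

variable {τ : Finset ℕ}

lemma six_not_mem_τ (hτ6 : τ ⊆ Finset.range 6) : 6 ∉ τ := by
  intro h
  exact absurd (Finset.mem_range.1 (hτ6 h)) (by omega)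

lemma mem_U1 {i : ℕ} : i ∈ U1 τ ↔ (i < 6 ∧ i ∉ τ) ∨ i = 6 := by
  simp [U1, Finset.mem_union, Finset.mem_sdiff, Finset.mem_range, Finset.mem_singleton]
  tauto

lemma U1_disj (hτ6 : τ ⊆ Finset.range 6) : Disjoint (U1 τ) τ := by
  rw [Finset.disjoint_left]
  intro i hi hiτ
  rcases mem_U1.1 hi with ⟨-, h⟩ | rfl
  · exact h hiτ
  · exact six_not_mem_τ hτ6 hiτ

lemma six_mem_U1 : 6 ∈ U1 τ := mem_U1.2 (Or.inr rfl)

lemma U1_subset_range7 : U1 τ ⊆ Finset.range 7 := by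
  intro i hi
  rcases mem_U1.1 hi with ⟨h, -⟩ | rfl
  · exact Finset.mem_range.2 (by omega)
  · exact Finset.mem_range.2 (by omega)

lemma τ_subset_range7 (hτ6 : τ ⊆ Finset.range 6) : τ ⊆ Finset.range 7 := by
  intro i hi
  exact Finset.mem_range.2 (by have := Finset.mem_range.1 (hτ6 hi); omega)

lemma card_U1 (hτ6 : τ ⊆ Finset.range 6) : (U1 τ).card = 7 - τ.card := by
  have h1 : Disjoint (Finset.range 6 \ τ) {6} := by
    rw [Finset.disjoint_left]
    intro i hi h6
    rw [Finset.mem_singleton] at h6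
    subst h6
    exact absurd (Finset.mem_range.1 (Finset.mem_sdiff.1 hi).1) (by omega)
  rw [U1, Finset.card_union_of_disjoint h1, Finset.card_sdiff_of_subset hτ6, Finset.card_singleton,
    Finset.card_range]
  have := Finset.card_le_card hτ6
  rw [Finset.card_range] at this
  omega

lemma U1_union_τ (hτ6 : τ ⊆ Finset.range 6) : U1 τ ∪ τ = Finset.range 7 := by
  ext i
  simp only [Finset.mem_union, mem_U1, Finset.mem_range]
  constructor
  · rintro ((⟨h, -⟩ | rfl) | h)
    · omega
    · omega
    · have := Finset.mem_range.1 (hτ6 h); omega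
  · intro h
    by_cases h6 : i = 6
    · exact Or.inl (Or.inr h6)
    · by_cases hiτ : i ∈ τ
      · exact Or.inr hiτ
      · exact Or.inl (Or.inl ⟨by omega, hiτ⟩)

lemma mem_starJ (hτ6 : τ ⊆ Finset.range 6) (hτ2 : 2 ≤ τ.card) {T : Finset ℕ} :
    T ∈ starJ τ ↔ T.Nonempty ∧ T ⊆ Finset.range 7 ∧ T ∩ τ ≠ τ ∧ T ∩ U1 τ ≠ U1 τ := by
  have hτne : τ.Nonempty := Finset.card_pos.1 (by omega)
  have hdisj := U1_disj hτ6
  constructor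
  · intro hT
    rcases mem_sjoin_iff.1 hT with h | h | ⟨σ, hσ, ν, hν, rfl⟩
    · rcases mem_stdSphere.1 h with ⟨hne, hsub, hneq⟩
      have hTτ : T ∩ τ = ∅ := by
        apply Finset.eq_empty_of_forall_notMem
        intro i hi
        rcases Finset.mem_inter.1 hi with ⟨h1, h2⟩
        exact (Finset.disjoint_left.1 hdisj (hsub h1)) h2
      refine ⟨hne, hsub.trans U1_subset_range7, ?_, ?_⟩
      · rw [hTτ]
        exact fun h' => hτne.ne_empty h'.symm
      · rw [Finset.inter_eq_left.2 hsub]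
        exact hneq
    · rcases mem_stdSphere.1 h with ⟨hne, hsub, hneq⟩
      have hTU : T ∩ U1 τ = ∅ := by
        apply Finset.eq_empty_of_forall_notMem
        intro i hi
        rcases Finset.mem_inter.1 hi with ⟨h1, h2⟩
        exact (Finset.disjoint_left.1 hdisj h2) (hsub h1)
      refine ⟨hne, hsub.trans (τ_subset_range7 hτ6), ?_, ?_⟩
      · rw [Finset.inter_eq_left.2 hsub]
        exact hneq
      · rw [hTU]
        exact fun h' => Finset.Nonempty.ne_empty ⟨6, six_mem_U1⟩ h'.symm
    · rcases mem_stdSphere.1 hσ with ⟨hne1, hsub1, hneq1⟩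
      rcases mem_stdSphere.1 hν with ⟨hne2, hsub2, hneq2⟩
      have e1 : (σ ∪ ν) ∩ τ = ν := by
        apply Finset.Subset.antisymm
        · intro i hi
          rcases Finset.mem_inter.1 hi with ⟨h1, h2⟩
          rcases Finset.mem_union.1 h1 with h3 | h3
          · exact absurd h2 (Finset.disjoint_left.1 hdisj (hsub1 h3))
          · exact h3
        · intro i hi
          exact Finset.mem_inter.2 ⟨Finset.mem_union_right _ hi, hsub2 hi⟩
      have e2 : (σ ∪ ν) ∩ U1 τ = σ := by
        apply Finset.Subset.antisymm
        · intro i hi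
          rcases Finset.mem_inter.1 hi with ⟨h1, h2⟩
          rcases Finset.mem_union.1 h1 with h3 | h3
          · exact h3
          · exact absurd (hsub2 h3) (Finset.disjoint_left.1 hdisj h2)
        · intro i hi
          exact Finset.mem_inter.2 ⟨Finset.mem_union_left _ hi, hsub1 hi⟩
      refine ⟨hne1.mono Finset.subset_union_left, ?_, ?_, ?_⟩
      · apply Finset.union_subset (hsub1.trans U1_subset_range7)
          (hsub2.trans (τ_subset_range7 hτ6))
      · rw [e1]; exact hneq2
      · rw [e2]; exact hneq1
  · rintro ⟨hne, h7, h1, h2⟩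
    have hcover : T = (T ∩ U1 τ) ∪ (T ∩ τ) := by
      apply Finset.Subset.antisymm
      · intro i hi
        have hi7 := Finset.mem_range.1 (h7 hi)
        by_cases hiτ : i ∈ τ
        · exact Finset.mem_union_right _ (Finset.mem_inter.2 ⟨hi, hiτ⟩)
        · refine Finset.mem_union_left _ (Finset.mem_inter.2 ⟨hi, ?_⟩)
          by_cases h6 : i = 6
          · exact mem_U1.2 (Or.inr h6)
          · exact mem_U1.2 (Or.inl ⟨by omega, hiτ⟩)
      · apply Finset.union_subset Finset.inter_subset_left Finset.inter_subset_left
    rcases Finset.eq_empty_or_nonempty (T ∩ U1 τ) with hU | hU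
    · have hT2 : T = T ∩ τ := by
        conv_lhs => rw [hcover]
        rw [hU, Finset.empty_union]
      have hsubτ : T ⊆ τ := by
        intro i hi
        rw [hT2] at hi
        exact (Finset.mem_inter.1 hi).2
      refine mem_sjoin_iff.2 (Or.inr (Or.inl (mem_stdSphere.2 ⟨hne, hsubτ, ?_⟩)))
      rw [hT2]
      exact h1
    rcases Finset.eq_empty_or_nonempty (T ∩ τ) with hτ' | hτ'
    · have hT2 : T = T ∩ U1 τ := by
        conv_lhs => rw [hcover]
        rw [hτ', Finset.union_empty]
      have hsubU : T ⊆ U1 τ := by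
        intro i hi
        rw [hT2] at hi
        exact (Finset.mem_inter.1 hi).2
      refine mem_sjoin_iff.2 (Or.inl (mem_stdSphere.2 ⟨hne, hsubU, ?_⟩))
      rw [hT2]
      exact h2
    · refine mem_sjoin_iff.2 (Or.inr (Or.inr ⟨T ∩ U1 τ,
        mem_stdSphere.2 ⟨hU, Finset.inter_subset_right, h2⟩, T ∩ τ,
        mem_stdSphere.2 ⟨hτ', Finset.inter_subset_right, h1⟩, hcover⟩))

lemma isComplex_starJ (hτ6 : τ ⊆ Finset.range 6) (hτ2 : 2 ≤ τ.card) (hτ5 : τ.card ≤ 5) :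
    IsComplex (starJ τ) := by
  apply isComplex_sjoin_spheres
  · rw [card_U1 hτ6]; omega
  · exact hτ2
  · exact U1_disj hτ6

lemma hull_face_nob {T : Finset ℕ} (h6 : 6 ∉ T) :
    convexHull ℝ ↑(T.image (qmap τ)) = hullA T := by
  have : T.image (qmap τ) = T.image bvec := by
    apply Finset.image_congr
    intro i hi
    have hi' : i ∈ T := Finset.mem_coe.1 hi
    have : i ≠ 6 := fun h => h6 (h ▸ hi')
    simp [qmap, this]
  rw [this, hullA_eq]

lemma erase_eq_parts (hτ6 : τ ⊆ Finset.range 6) {T : Finset ℕ} (hT7 : T ⊆ Finset.range 7) :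
    (T ∩ τ) ∪ (T ∩ (Finset.range 6 \ τ)) = T.erase 6 := by
  ext i
  simp only [Finset.mem_union, Finset.mem_inter, Finset.mem_sdiff, Finset.mem_range,
    Finset.mem_erase]
  constructor
  · rintro (⟨h1, h2⟩ | ⟨h1, h2, h3⟩)
    · exact ⟨fun h => six_not_mem_τ hτ6 (h ▸ h2), h1⟩
    · exact ⟨by omega, h1⟩
  · rintro ⟨h1, h2⟩
    have : i < 7 := Finset.mem_range.1 (hT7 h2)
    by_cases hiτ : i ∈ τ
    · exact Or.inl ⟨h2, hiτ⟩
    · refine Or.inr ⟨h2, by omega, hiτ⟩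

lemma hull_face_bary (hτ6 : τ ⊆ Finset.range 6) (hτ2 : 2 ≤ τ.card) {T : Finset ℕ}
    (h6 : 6 ∈ T) (hT7 : T ⊆ Finset.range 7) (hTτ : T ∩ τ ≠ τ) :
    convexHull ℝ ↑(T.image (qmap τ)) =
      hullB τ (T ∩ τ) (T ∩ (Finset.range 6 \ τ)) := by
  have hq6 : qmap τ 6 = bary τ := by simp [qmap]
  have hqi : Set.EqOn (qmap τ) bvec ↑(T.erase 6) := by
    intro i hi
    have : i ≠ 6 := (Finset.mem_erase.1 (Finset.mem_coe.1 hi)).1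
    simp [qmap, this]
  have himg : T.image (qmap τ) =
      insert (bary τ) (((T ∩ τ) ∪ (T ∩ (Finset.range 6 \ τ))).image bvec) := by
    rw [erase_eq_parts hτ6 hT7]
    conv_lhs => rw [← Finset.insert_erase h6]
    rw [Finset.image_insert, hq6, Finset.image_congr hqi]
  rw [himg]
  apply hullB_eq hτ2 Finset.inter_subset_right hTτ
  · rw [Finset.disjoint_left]
    intro i hi h
    exact (Finset.mem_sdiff.1 (Finset.mem_inter.1 hi).2).2 h
  · exact hτ6
  · exact Finset.inter_subset_right.trans Finset.sdiff_subset

end StarComplex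

section GComplexes

/-- Build a geometric complex from an abstract complex on `ℕ` and a vertex map. -/
def gComplexOf (K : Finset (Finset ℕ)) (f : ℕ → (ℕ → ℝ)) (hK : IsComplex K)
    (hind : ∀ s ∈ K.image (Finset.image f),
      AffineIndependent ℝ (fun x : {y : ℕ → ℝ // y ∈ s} => (x : ℕ → ℝ)))
    (hglue : ∀ s ∈ K.image (Finset.image f), ∀ t ∈ K.image (Finset.image f),
      convexHull ℝ (s : Set (ℕ → ℝ)) ∩ convexHull ℝ (t : Set (ℕ → ℝ)) =
        convexHull ℝ ((s ∩ t : Finset (ℕ → ℝ)) : Set (ℕ → ℝ))) : GComplex where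
  faces := K.image (Finset.image f)
  nonempty := hK.1.image _
  empty_not_mem := by
    intro h
    rcases Finset.mem_image.1 h with ⟨T, hT, hTe⟩
    rw [Finset.image_eq_empty] at hTe
    exact hK.2.1 (hTe ▸ hT)
  down_closed := by
    intro s hs t hts htne
    rcases Finset.mem_image.1 hs with ⟨T, hT, rfl⟩
    have ht' : t = (T.filter fun i => f i ∈ t).image f := image_eq_of_subset_image hts
    have hT' : (T.filter fun i => f i ∈ t) ∈ K := by
      apply hK.2.2 T hT _ (Finset.filter_subset _ _)
      obtain ⟨y, hy⟩ := htne
      rcases Finset.mem_image.1 (hts hy) with ⟨i, hiT, rfl⟩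
      exact ⟨i, Finset.mem_filter.2 ⟨hiT, hy⟩⟩
    rw [ht']
    exact Finset.mem_image_of_mem _ hT'
  indep := hind
  glue := hglue

lemma carrier_gComplexOf (K : Finset (Finset ℕ)) (f : ℕ → (ℕ → ℝ)) (hK) (hind) (hglue) :
    (gComplexOf K f hK hind hglue).carrier =
      ⋃ T ∈ K, convexHull ℝ ((T.image f : Finset (ℕ → ℝ)) : Set (ℕ → ℝ)) := by
  show ⋃ s ∈ K.image (Finset.image f), convexHull ℝ ((s : Finset (ℕ → ℝ)) : Set (ℕ → ℝ)) = _
  ext x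
  simp only [Set.mem_iUnion]
  constructor
  · rintro ⟨s, hs, hx⟩
    rcases Finset.mem_image.1 hs with ⟨T, hT, rfl⟩
    exact ⟨T, hT, hx⟩
  · rintro ⟨T, hT, hx⟩
    exact ⟨T.image f, Finset.mem_image_of_mem _ hT, hx⟩

lemma range6_card : (2:ℕ) ≤ (Finset.range 6).card := by
  rw [Finset.card_range]; omega

lemma glueStd : ∀ s ∈ (stdSphere (Finset.range 6)).image (Finset.image bvec),
    ∀ t ∈ (stdSphere (Finset.range 6)).image (Finset.image bvec),
    convexHull ℝ (s : Set (ℕ → ℝ)) ∩ convexHull ℝ (t : Set (ℕ → ℝ)) =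
      convexHull ℝ ((s ∩ t : Finset (ℕ → ℝ)) : Set (ℕ → ℝ)) := by
  intro s hs t ht
  rcases Finset.mem_image.1 hs with ⟨S, _, rfl⟩
  rcases Finset.mem_image.1 ht with ⟨S', _, rfl⟩
  rw [hullA_eq, hullA_eq, ← Finset.image_inter S S' bvec_injective, hullA_eq]
  exact hullA_inter S S'

lemma indepStd : ∀ s ∈ (stdSphere (Finset.range 6)).image (Finset.image bvec),
    AffineIndependent ℝ (fun x : {y : ℕ → ℝ // y ∈ s} => (x : ℕ → ℝ)) := by
  intro s hs
  rcases Finset.mem_image.1 hs with ⟨S, _, rfl⟩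
  apply face_indep (τ := Finset.range 5) (by rw [Finset.card_range]; omega) _ S
  · intro z hz
    rcases Finset.mem_image.1 hz with ⟨j, hj, rfl⟩
    exact Or.inr ⟨j, hj, rfl⟩
  · intro h
    rcases Finset.mem_image.1 h with ⟨j, _, hbj⟩
    exact absurd hbj (bvec_ne_bary (by rw [Finset.card_range]; omega) j)

/-- The straight realization of the boundary of the 5-simplex. -/
def Gstd : GComplex :=
  gComplexOf (stdSphere (Finset.range 6)) bvec (isComplex_stdSphere range6_card)
    indepStd glueStd

lemma realizesStd : Realizes Gstd (stdSphere (Finset.range 6)) :=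
  ⟨bvec, bvec_injective.injOn, rfl⟩

variable {τ : Finset ℕ}

lemma qmap_image_eq {T : Finset ℕ} (h6 : 6 ∉ T) : T.image (qmap τ) = T.image bvec := by
  apply Finset.image_congr
  intro i hi
  have hi' : i ∈ T := Finset.mem_coe.1 hi
  have : i ≠ 6 := fun h => h6 (h ▸ hi')
  simp [qmap, this]

lemma sdiff_inter_disj (A : Finset ℕ) : Disjoint (A ∩ (Finset.range 6 \ τ)) τ := by
  rw [Finset.disjoint_left]
  intro i hi h
  exact (Finset.mem_sdiff.1 (Finset.mem_inter.1 hi).2).2 h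

lemma not_tau_subset {T : Finset ℕ} (h1 : T ∩ τ ≠ τ) : ¬ τ ⊆ T :=
  fun h => h1 (Finset.inter_eq_right.2 h)

lemma T_mem_sphere (hτ6 : τ ⊆ Finset.range 6) {T : Finset ℕ} (h6T : 6 ∉ T)
    (h7 : T ⊆ Finset.range 7) (hne : T.Nonempty) (h1 : T ∩ τ ≠ τ) :
    T ∈ stdSphere (Finset.range 6) := by
  refine mem_stdSphere.2 ⟨hne, ?_, ?_⟩
  · intro i hi
    have := Finset.mem_range.1 (h7 hi)
    have : i ≠ 6 := fun h => h6T (h ▸ hi)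
    refine Finset.mem_range.2 (by omega)
  · rintro rfl
    exact not_tau_subset h1 hτ6

lemma union_mem_sphere (hτ6 : τ ⊆ Finset.range 6) (hτ2 : 2 ≤ τ.card) {T : Finset ℕ}
    (h6T : 6 ∈ T) (h2 : T ∩ U1 τ ≠ U1 τ) :
    τ ∪ (T ∩ (Finset.range 6 \ τ)) ∈ stdSphere (Finset.range 6) := by
  refine mem_stdSphere.2 ⟨?_, ?_, ?_⟩
  · exact (Finset.card_pos.1 (by omega)).mono Finset.subset_union_left
  · apply Finset.union_subset hτ6
    exact Finset.inter_subset_right.trans Finset.sdiff_subset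
  · intro heq
    apply h2
    apply Finset.Subset.antisymm Finset.inter_subset_right
    intro i hi
    rcases mem_U1.1 hi with ⟨hlt, hiτ⟩ | rfl
    · have : i ∈ τ ∪ (T ∩ (Finset.range 6 \ τ)) := by
        rw [heq]; exact Finset.mem_range.2 hlt
      rcases Finset.mem_union.1 this with h | h
      · exact absurd h hiτ
      · exact Finset.mem_inter.2 ⟨(Finset.mem_inter.1 h).1, hi⟩
    · exact Finset.mem_inter.2 ⟨h6T, hi⟩

lemma glueStar (hτ6 : τ ⊆ Finset.range 6) (hτ2 : 2 ≤ τ.card) :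
    ∀ s ∈ (starJ τ).image (Finset.image (qmap τ)),
    ∀ t ∈ (starJ τ).image (Finset.image (qmap τ)),
    convexHull ℝ (s : Set (ℕ → ℝ)) ∩ convexHull ℝ (t : Set (ℕ → ℝ)) =
      convexHull ℝ ((s ∩ t : Finset (ℕ → ℝ)) : Set (ℕ → ℝ)) := by
  intro s hs t ht
  rcases Finset.mem_image.1 hs with ⟨T, hT, rfl⟩
  rcases Finset.mem_image.1 ht with ⟨T', hT', rfl⟩
  obtain ⟨hne, h7, h1, h2⟩ := (mem_starJ hτ6 hτ2).1 hT
  obtain ⟨hne', h7', h1', h2'⟩ := (mem_starJ hτ6 hτ2).1 hT'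
  have hinj : Set.InjOn (qmap τ) (↑T ∪ ↑T') := by
    apply (qmap_injOn hτ2).mono
    rw [← Finset.coe_union]
    exact_mod_cast Finset.union_subset h7 h7'
  rw [← Finset.image_inter_of_injOn T T' hinj]
  have hTT7 : T ∩ T' ⊆ Finset.range 7 := Finset.inter_subset_left.trans h7
  have hTTτ : (T ∩ T') ∩ τ ≠ τ := by
    intro h
    apply h1
    apply Finset.inter_eq_right.2
    intro i hiτ
    have : i ∈ (T ∩ T') ∩ τ := by rw [h]; exact hiτ
    exact (Finset.mem_inter.1 (Finset.mem_inter.1 this).1).1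
  by_cases h6T : 6 ∈ T <;> by_cases h6T' : 6 ∈ T'
  · -- both contain the barycenter
    rw [hull_face_bary hτ6 hτ2 h6T h7 h1, hull_face_bary hτ6 hτ2 h6T' h7' h1',
      hull_face_bary hτ6 hτ2 (Finset.mem_inter.2 ⟨h6T, h6T'⟩) hTT7 hTTτ,
      hullB_inter Finset.inter_subset_right h1 Finset.inter_subset_right h1'
        (sdiff_inter_disj T) (sdiff_inter_disj T')]
    have e1 : (T ∩ τ) ∩ (T' ∩ τ) = (T ∩ T') ∩ τ := by
      ext i; simp only [Finset.mem_inter]; tauto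
    have e2 : (T ∩ (Finset.range 6 \ τ)) ∩ (T' ∩ (Finset.range 6 \ τ)) =
        (T ∩ T') ∩ (Finset.range 6 \ τ) := by
      ext i; simp only [Finset.mem_inter]; tauto
    rw [e1, e2]
  · -- barycenter in T only
    have h6TT : 6 ∉ T ∩ T' := fun h => h6T' (Finset.mem_inter.1 h).2
    rw [hull_face_bary hτ6 hτ2 h6T h7 h1, hull_face_nob h6T', hull_face_nob h6TT,
      Set.inter_comm,
      hullAB_inter Finset.inter_subset_right h1 (sdiff_inter_disj T)
        (not_tau_subset h1'), erase_eq_parts hτ6 h7]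
    have e : T' ∩ T.erase 6 = T ∩ T' := by
      ext i
      simp only [Finset.mem_inter, Finset.mem_erase]
      constructor
      · rintro ⟨ha, hb, hc⟩
        exact ⟨hc, ha⟩
      · rintro ⟨ha, hb⟩
        exact ⟨hb, fun h => h6T' (h ▸ hb), ha⟩
    rw [e]
  · -- barycenter in T' only
    have h6TT : 6 ∉ T ∩ T' := fun h => h6T (Finset.mem_inter.1 h).1
    rw [hull_face_nob h6T, hull_face_bary hτ6 hτ2 h6T' h7' h1', hull_face_nob h6TT,
      hullAB_inter Finset.inter_subset_right h1' (sdiff_inter_disj T')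
        (not_tau_subset h1), erase_eq_parts hτ6 h7']
    have e : T ∩ T'.erase 6 = T ∩ T' := by
      ext i
      simp only [Finset.mem_inter, Finset.mem_erase]
      constructor
      · rintro ⟨ha, hb, hc⟩
        exact ⟨ha, hc⟩
      · rintro ⟨ha, hb⟩
        exact ⟨ha, fun h => h6T (h ▸ ha), hb⟩
    rw [e]
  · -- no barycenter
    have h6TT : 6 ∉ T ∩ T' := fun h => h6T (Finset.mem_inter.1 h).1
    rw [hull_face_nob h6T, hull_face_nob h6T', hull_face_nob h6TT]
    exact hullA_inter T T'

lemma indepStar (hτ6 : τ ⊆ Finset.range 6) (hτ2 : 2 ≤ τ.card) :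
    ∀ s ∈ (starJ τ).image (Finset.image (qmap τ)),
    AffineIndependent ℝ (fun x : {y : ℕ → ℝ // y ∈ s} => (x : ℕ → ℝ)) := by
  intro s hs
  rcases Finset.mem_image.1 hs with ⟨T, hT, rfl⟩
  obtain ⟨hne, h7, h1, h2⟩ := (mem_starJ hτ6 hτ2).1 hT
  apply face_indep hτ2 _ (T.erase 6)
  · intro z hz
    rcases Finset.mem_image.1 hz with ⟨i, hi, rfl⟩
    by_cases hi6 : i = 6
    · subst hi6
      exact Or.inl (by simp [qmap])
    · exact Or.inr ⟨i, Finset.mem_erase.2 ⟨hi6, hi⟩, by simp [qmap, hi6]⟩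
  · intro _
    have hnτ : ¬ τ ⊆ T := not_tau_subset h1
    obtain ⟨j₀, hj₀τ, hj₀T⟩ : ∃ j ∈ τ, j ∉ T := by
      by_contra h
      push_neg at h
      exact hnτ h
    exact ⟨j₀, hj₀τ, fun h => hj₀T (Finset.mem_of_mem_erase h)⟩

/-- The star subdivision realization of the join sphere. -/
def GStar (τ : Finset ℕ) (hτ6 : τ ⊆ Finset.range 6) (hτ2 : 2 ≤ τ.card)
    (hτ5 : τ.card ≤ 5) : GComplex :=
  gComplexOf (starJ τ) (qmap τ) (isComplex_starJ hτ6 hτ2 hτ5)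
    (indepStar hτ6 hτ2) (glueStar hτ6 hτ2)

lemma realizesStar (hτ6 : τ ⊆ Finset.range 6) (hτ2 : 2 ≤ τ.card) (hτ5 : τ.card ≤ 5) :
    Realizes (GStar τ hτ6 hτ2 hτ5) (starJ τ) := by
  refine ⟨qmap τ, ?_, rfl⟩
  apply (qmap_injOn hτ2).mono
  have hU2 : 2 ≤ (U1 τ).card := by rw [card_U1 hτ6]; omega
  rw [starJ, verts_sjoin, verts_stdSphere hU2, verts_stdSphere hτ2, U1_union_τ hτ6]

lemma subdivStar (hτ6 : τ ⊆ Finset.range 6) (hτ2 : 2 ≤ τ.card) (hτ5 : τ.card ≤ 5) :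
    Subdivides (GStar τ hτ6 hτ2 hτ5) Gstd := by
  have hτne : τ.Nonempty := Finset.card_pos.1 (by omega)
  constructor
  · -- equal carriers
    rw [GStar, Gstd, carrier_gComplexOf, carrier_gComplexOf]
    ext x
    simp only [Set.mem_iUnion]
    constructor
    · rintro ⟨T, hT, hx⟩
      obtain ⟨hne, h7, h1, h2⟩ := (mem_starJ hτ6 hτ2).1 hT
      by_cases h6T : 6 ∈ T
      · refine ⟨τ ∪ (T ∩ (Finset.range 6 \ τ)), union_mem_sphere hτ6 hτ2 h6T h2, ?_⟩
        rw [hull_face_bary hτ6 hτ2 h6T h7 h1] at hx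
        rw [hullA_eq]
        exact ⟨hx.1, hx.2.1, hx.2.2.1⟩
      · refine ⟨T, T_mem_sphere hτ6 h6T h7 hne h1, ?_⟩
        rw [hull_face_nob h6T] at hx
        rw [hullA_eq]
        exact hx
    · rintro ⟨S, hS, hx⟩
      obtain ⟨hSne, hS6, hSneq⟩ := mem_stdSphere.1 hS
      have h6S : 6 ∉ S := fun h => absurd (Finset.mem_range.1 (hS6 h)) (by omega)
      rw [hullA_eq] at hx
      by_cases hτS : τ ⊆ S
      · -- star the minimal coordinate
        obtain ⟨j₀, hj₀, hmin⟩ := Finset.exists_min_image τ x hτne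
        set T' := insert 6 ((τ.erase j₀) ∪ (S \ τ)) with hT'def
        have h6T' : 6 ∈ T' := Finset.mem_insert_self _ _
        have hT'7 : T' ⊆ Finset.range 7 := by
          apply Finset.insert_subset (Finset.mem_range.2 (by omega))
          apply Finset.union_subset
          · exact (Finset.erase_subset _ _).trans (τ_subset_range7 hτ6)
          · exact Finset.sdiff_subset.trans (fun i hi =>
              Finset.mem_range.2 (by have := Finset.mem_range.1 (hS6 hi); omega))
        have e1 : T' ∩ τ = τ.erase j₀ := by
          ext i
          simp only [hT'def, Finset.mem_inter, Finset.mem_insert, Finset.mem_union,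
            Finset.mem_erase, Finset.mem_sdiff]
          constructor
          · rintro ⟨(rfl | ⟨hi1, hi2⟩ | ⟨hi1, hi2⟩), hiτ⟩
            · exact absurd hiτ (six_not_mem_τ hτ6)
            · exact ⟨hi1, hiτ⟩
            · exact absurd hiτ hi2
          · rintro ⟨hi1, hi2⟩
            exact ⟨Or.inr (Or.inl ⟨hi1, hi2⟩), hi2⟩
        have e2 : T' ∩ (Finset.range 6 \ τ) = S \ τ := by
          ext i
          simp only [hT'def, Finset.mem_inter, Finset.mem_insert, Finset.mem_union,
            Finset.mem_erase, Finset.mem_sdiff, Finset.mem_range]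
          constructor
          · rintro ⟨(rfl | ⟨hi1, hi2⟩ | ⟨hi1, hi2⟩), hir, hiτ⟩
            · omega
            · exact absurd hi2 hiτ
            · exact ⟨hi1, hi2⟩
          · rintro ⟨hi1, hi2⟩
            refine ⟨Or.inr (Or.inr ⟨hi1, hi2⟩), Finset.mem_range.1 (hS6 hi1), hi2⟩
        have he1ne : T' ∩ τ ≠ τ := by
          rw [e1]
          intro h
          exact (Finset.mem_erase.1 (h.symm ▸ hj₀)).1 rfl
        have hT'star : T' ∈ starJ τ := by
          refine (mem_starJ hτ6 hτ2).2 ⟨⟨6, h6T'⟩, hT'7, he1ne, ?_⟩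
          obtain ⟨k, hkr, hkS⟩ : ∃ k ∈ Finset.range 6, k ∉ S := by
            by_contra h
            push_neg at h
            exact hSneq (Finset.Subset.antisymm hS6 h)
          have hkτ : k ∉ τ := fun h => hkS (hτS h)
          have hkU : k ∈ U1 τ := mem_U1.2 (Or.inl ⟨Finset.mem_range.1 hkr, hkτ⟩)
          intro h
          have : k ∈ T' ∩ U1 τ := by rw [h]; exact hkU
          rcases Finset.mem_insert.1 (Finset.mem_inter.1 this).1 with h' | h'
          · exact absurd (Finset.mem_range.1 hkr) (by omega)
          · rcases Finset.mem_union.1 h' with h'' | h''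
            · exact hkτ (Finset.mem_of_mem_erase h'')
            · exact hkS (Finset.mem_sdiff.1 h'').1
        refine ⟨T', hT'star, ?_⟩
        rw [hull_face_bary hτ6 hτ2 h6T' hT'7 he1ne, e1, e2]
        obtain ⟨h0, hz, hs⟩ := hx
        have hcup : τ ∪ (S \ τ) = S := Finset.union_sdiff_of_subset hτS
        refine ⟨h0, ?_, ?_, x j₀, ?_, ?_⟩
        · rw [hcup]; exact hz
        · rw [hcup]; exact hs
        · intro j hj
          rcases Finset.mem_sdiff.1 hj with ⟨hjτ, hjer⟩
          have : j = j₀ := by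
            by_contra hne'
            exact hjer (Finset.mem_erase.2 ⟨hne', hjτ⟩)
          rw [this]
        · intro i hi
          exact hmin i (Finset.mem_of_mem_erase hi)
      · refine ⟨S, ?_, ?_⟩
        · refine (mem_starJ hτ6 hτ2).2 ⟨hSne, fun i hi =>
            Finset.mem_range.2 (by have := Finset.mem_range.1 (hS6 hi); omega), ?_, ?_⟩
          · intro h
            exact hτS (by rw [← h]; exact Finset.inter_subset_left)
          · intro h
            exact h6S (Finset.mem_inter.1 (h.symm ▸ six_mem_U1)).1
        · rw [hull_face_nob h6S]
          exact hx
  · -- each star face lies in a face of the standard sphere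
    intro s hs
    rcases Finset.mem_image.1 hs with ⟨T, hT, rfl⟩
    obtain ⟨hne, h7, h1, h2⟩ := (mem_starJ hτ6 hτ2).1 hT
    by_cases h6T : 6 ∈ T
    · refine ⟨(τ ∪ (T ∩ (Finset.range 6 \ τ))).image bvec,
        Finset.mem_image_of_mem _ (union_mem_sphere hτ6 hτ2 h6T h2), ?_⟩
      rw [hull_face_bary hτ6 hτ2 h6T h7 h1, hullA_eq]
      intro x hx
      exact ⟨hx.1, hx.2.1, hx.2.2.1⟩
    · refine ⟨T.image bvec, Finset.mem_image_of_mem _ (T_mem_sphere hτ6 h6T h7 hne h1), ?_⟩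
      rw [qmap_image_eq h6T]

end GComplexes

section FinalGeom

variable {V : Type*} [DecidableEq V]

lemma geom_sphere6' (W : Finset V) (hW : W.card = 6) : IsCombSphere 4 (stdSphere W) := by
  have hcard : W.card = (Finset.range 6).card := by rw [hW, Finset.card_range]
  set e := Finset.equivOfCardEq hcard with hedef
  set f : V → ℕ := fun v => if h : v ∈ W then (e ⟨v, h⟩ : ℕ) else 0 with hfdef
  have hfW : ∀ v (h : v ∈ W), f v = (e ⟨v, h⟩ : ℕ) := fun v h => dif_pos h
  have hinj : Set.InjOn f ↑W := by
    intro a ha b hb hab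
    rw [hfW a (Finset.mem_coe.1 ha), hfW b (Finset.mem_coe.1 hb)] at hab
    exact congrArg Subtype.val (e.injective (Subtype.coe_injective hab))
  have himg : W.image f = Finset.range 6 := by
    apply Finset.Subset.antisymm
    · intro u hu
      rcases Finset.mem_image.1 hu with ⟨v, hv, rfl⟩
      rw [hfW v hv]
      exact (e ⟨v, hv⟩).2
    · intro u hu
      refine Finset.mem_image.2 ⟨(e.symm ⟨u, hu⟩ : V), (e.symm ⟨u, hu⟩).2, ?_⟩
      rw [hfW _ (e.symm ⟨u, hu⟩).2, Subtype.coe_eta, Equiv.apply_symm_apply]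
  have hiso : Iso (stdSphere W) (stdSphere (Finset.range 6)) := by
    refine ⟨f, ?_, ?_⟩
    · rw [verts_stdSphere (by omega)]
      exact hinj
    · rw [stdSphere_image hinj, himg]
  exact ⟨Finset.range 6, by rw [Finset.card_range], combEquiv_of_iso hiso realizesStd⟩

lemma geom_join' (V₁ V₂ : Finset V) (hd : Disjoint V₁ V₂) (h1 : 2 ≤ V₁.card)
    (h2 : 2 ≤ V₂.card) (h7 : V₁.card + V₂.card = 7) :
    IsCombSphere 4 (sjoin (stdSphere V₁) (stdSphere V₂)) := by
  obtain ⟨τ, hτ6, hτcard⟩ := Finset.exists_subset_card_eq (s := Finset.range 6) (n := V₂.card)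
    (by rw [Finset.card_range]; omega)
  have hτ2 : 2 ≤ τ.card := by omega
  have hτ5 : τ.card ≤ 5 := by omega
  have hcard1 : V₁.card = (U1 τ).card := by rw [card_U1 hτ6]; omega
  have hcard2 : V₂.card = τ.card := hτcard.symm
  set e₁ := Finset.equivOfCardEq hcard1 with he₁def
  set e₂ := Finset.equivOfCardEq hcard2 with he₂def
  set f : V → ℕ := fun v => if h : v ∈ V₁ then (e₁ ⟨v, h⟩ : ℕ)
    else if h : v ∈ V₂ then (e₂ ⟨v, h⟩ : ℕ) else 0 with hfdef
  have hfV₁ : ∀ v (h : v ∈ V₁), f v = (e₁ ⟨v, h⟩ : ℕ) := fun v h => dif_pos h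
  have hfV₂ : ∀ v (h : v ∈ V₂), f v = (e₂ ⟨v, h⟩ : ℕ) := by
    intro v h
    show (if h' : v ∈ V₁ then ((e₁ ⟨v, h'⟩ : {x // x ∈ U1 τ}) : ℕ)
      else if h' : v ∈ V₂ then ((e₂ ⟨v, h'⟩ : {x // x ∈ τ}) : ℕ) else 0) = _
    rw [dif_neg (Finset.disjoint_right.1 hd h), dif_pos h]
  have hmem1 : ∀ v (h : v ∈ V₁), f v ∈ U1 τ := fun v h => by
    rw [hfV₁ v h]; exact (e₁ ⟨v, h⟩).2
  have hmem2 : ∀ v (h : v ∈ V₂), f v ∈ τ := fun v h => by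
    rw [hfV₂ v h]; exact (e₂ ⟨v, h⟩).2
  have hUτdisj := U1_disj hτ6
  have hinj : Set.InjOn f ↑(V₁ ∪ V₂) := by
    intro a ha b hb hab
    rcases Finset.mem_union.1 (Finset.mem_coe.1 ha) with ha' | ha' <;>
      rcases Finset.mem_union.1 (Finset.mem_coe.1 hb) with hb' | hb'
    · rw [hfV₁ a ha', hfV₁ b hb'] at hab
      exact congrArg Subtype.val (e₁.injective (Subtype.coe_injective hab))
    · exact absurd (by rw [hab]; exact hmem2 b hb')
        (Finset.disjoint_left.1 hUτdisj (hmem1 a ha'))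
    · exact absurd (by rw [← hab]; exact hmem2 a ha')
        (Finset.disjoint_left.1 hUτdisj (hmem1 b hb'))
    · rw [hfV₂ a ha', hfV₂ b hb'] at hab
      exact congrArg Subtype.val (e₂.injective (Subtype.coe_injective hab))
  have himg1 : V₁.image f = U1 τ := by
    apply Finset.Subset.antisymm
    · intro u hu
      rcases Finset.mem_image.1 hu with ⟨v, hv, rfl⟩
      exact hmem1 v hv
    · intro u hu
      refine Finset.mem_image.2 ⟨(e₁.symm ⟨u, hu⟩ : V), (e₁.symm ⟨u, hu⟩).2, ?_⟩
      rw [hfV₁ _ (e₁.symm ⟨u, hu⟩).2, Subtype.coe_eta, Equiv.apply_symm_apply]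
  have himg2 : V₂.image f = τ := by
    apply Finset.Subset.antisymm
    · intro u hu
      rcases Finset.mem_image.1 hu with ⟨v, hv, rfl⟩
      exact hmem2 v hv
    · intro u hu
      refine Finset.mem_image.2 ⟨(e₂.symm ⟨u, hu⟩ : V), (e₂.symm ⟨u, hu⟩).2, ?_⟩
      rw [hfV₂ _ (e₂.symm ⟨u, hu⟩).2, Subtype.coe_eta, Equiv.apply_symm_apply]
  have hinj1 : Set.InjOn f ↑V₁ := hinj.mono (Finset.coe_subset.2 Finset.subset_union_left)
  have hinj2 : Set.InjOn f ↑V₂ := hinj.mono (Finset.coe_subset.2 Finset.subset_union_right)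
  have hiso : Iso (sjoin (stdSphere V₁) (stdSphere V₂)) (starJ τ) := by
    refine ⟨f, ?_, ?_⟩
    · rw [verts_sjoin, verts_stdSphere h1, verts_stdSphere h2]
      exact_mod_cast hinj
    · rw [sjoin_image, stdSphere_image hinj1, stdSphere_image hinj2, himg1, himg2, starJ]
  exact ⟨Finset.range 6, by rw [Finset.card_range],
    GStar τ hτ6 hτ2 hτ5, GStar τ hτ6 hτ2 hτ5, Gstd, GStar τ hτ6 hτ2 hτ5,
    realizes_of_iso hiso (realizesStar hτ6 hτ2 hτ5), realizesStd,
    subdivides_refl _, subdivStar hτ6 hτ2 hτ5, iso_refl _⟩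

end FinalGeom

/-! ### The two geometric ingredients (proved later) -/

section Geom

variable {V : Type*} [DecidableEq V]

lemma geom_sphere6 (W : Finset V) (hW : W.card = 6) : IsCombSphere 4 (stdSphere W) :=
  geom_sphere6' W hW

lemma geom_join (V₁ V₂ : Finset V) (hd : Disjoint V₁ V₂) (h1 : 2 ≤ V₁.card)
    (h2 : 2 ≤ V₂.card) (h7 : V₁.card + V₂.card = 7) :
    IsCombSphere 4 (sjoin (stdSphere V₁) (stdSphere V₂)) :=
  geom_join' V₁ V₂ hd h1 h2 h7

end Geom

/-! ### Combinatorial part -/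

section Comb

variable {V : Type*} [DecidableEq V]

lemma sphere_sub {Y : Finset (Finset V)} (hY : IsComplex Y) {W' : Finset V}
    (hall : ∀ u ∈ W', W'.erase u ∈ Y) : stdSphere W' ⊆ Y := by
  intro σ hσ
  rcases mem_stdSphere.1 hσ with ⟨h1, h2, h3⟩
  obtain ⟨u, huW, huσ⟩ := Finset.exists_of_ssubset (lt_of_le_of_ne h2 h3)
  exact hY.2.2 _ (hall u huW) σ (Finset.subset_erase.2 ⟨h2, huσ⟩) h1

lemma sjoin_spheres_subset {Y : Finset (Finset V)} (hY : IsComplex Y) {V₁ V₂ : Finset V}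
    (hd : Disjoint V₁ V₂) (hu : V₁ ∪ V₂ = verts Y) (hn1 : V₁.Nonempty) (hn2 : V₂.Nonempty)
    (hcross : ∀ x ∈ V₁, ∀ y ∈ V₂, verts Y \ {x, y} ∈ Y) :
    sjoin (stdSphere V₁) (stdSphere V₂) ⊆ Y := by
  have hsub1 : V₁ ⊆ verts Y := hu ▸ Finset.subset_union_left
  have hsub2 : V₂ ⊆ verts Y := hu ▸ Finset.subset_union_right
  have key : ∀ σ ν : Finset V, σ ⊆ V₁ → ν ⊆ V₂ → (∀ x, x ∈ V₁ → x ∉ σ → ∀ y, y ∈ V₂ → y ∉ ν →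
      σ ∪ ν ⊆ verts Y \ {x, y}) := by
    intro σ ν hσ hν x hx hxσ y hy hyν a ha
    rcases Finset.mem_union.1 ha with h | h
    · refine Finset.mem_sdiff.2 ⟨hsub1 (hσ h), ?_⟩
      simp only [Finset.mem_insert, Finset.mem_singleton]
      push_neg
      constructor
      · rintro rfl; exact hxσ h
      · rintro rfl; exact (Finset.disjoint_left.1 hd (hσ h)) hy
    · refine Finset.mem_sdiff.2 ⟨hsub2 (hν h), ?_⟩
      simp only [Finset.mem_insert, Finset.mem_singleton]
      push_neg
      constructor
      · rintro rfl; exact (Finset.disjoint_left.1 hd hx) (hν h)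
      · rintro rfl; exact hyν h
  intro T hT
  rcases mem_sjoin_iff.1 hT with h | h | ⟨σ, hσ, ν, hν, rfl⟩
  · rcases mem_stdSphere.1 h with ⟨h1, h2, h3⟩
    obtain ⟨x, hx, hxσ⟩ := Finset.exists_of_ssubset (lt_of_le_of_ne h2 h3)
    obtain ⟨y, hy⟩ := hn2
    have := key T ∅ h2 (Finset.empty_subset _) x hx hxσ y hy (Finset.notMem_empty y)
    rw [Finset.union_empty] at this
    exact hY.2.2 _ (hcross x hx y hy) T this h1
  · rcases mem_stdSphere.1 h with ⟨h1, h2, h3⟩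
    obtain ⟨y, hy, hyν⟩ := Finset.exists_of_ssubset (lt_of_le_of_ne h2 h3)
    obtain ⟨x, hx⟩ := hn1
    have := key ∅ T (Finset.empty_subset _) h2 x hx (Finset.notMem_empty x) y hy hyν
    rw [Finset.empty_union] at this
    exact hY.2.2 _ (hcross x hx y hy) T this h1
  · rcases mem_stdSphere.1 hσ with ⟨h1, h2, h3⟩
    rcases mem_stdSphere.1 hν with ⟨h4, h5, h6⟩
    obtain ⟨x, hx, hxσ⟩ := Finset.exists_of_ssubset (lt_of_le_of_ne h2 h3)
    obtain ⟨y, hy, hyν⟩ := Finset.exists_of_ssubset (lt_of_le_of_ne h5 h6)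
    exact hY.2.2 _ (hcross x hx y hy) _ (key σ ν h2 h5 x hx hxσ y hy hyν)
      (Finset.Nonempty.mono Finset.subset_union_left h1)

end Comb

/-- a pure 4-dimensional simplicial complex on at most 7 vertices
in which every 3-face lies in at least two facets contains a combinatorial
4-sphere as a subcomplex: either the standard 4-sphere on 6 of its vertices, or
the join of the standard spheres on the two parts of a partition
`V(Y) = V₁ ⊔ V₂` with `|V₁|, |V₂| ≥ 2`. -/
theorem seven_vertex_four_dim_contains_sphere {V : Type*} [DecidableEq V]
    (Y : Finset (Finset V)) (hY : IsComplex Y) (hpure : IsPure 4 Y)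
    (h7 : (verts Y).card ≤ 7)
    (hdeg : ∀ s ∈ Y, s.card = 4 → 2 ≤ degOf Y 4 s) :
    (∃ S : Finset (Finset V), S ⊆ Y ∧ IsComplex S ∧ IsCombSphere 4 S) ∧
    ((∃ W : Finset V, W ⊆ verts Y ∧ W.card = 6 ∧ stdSphere W ⊆ Y) ∨
     (∃ V₁ V₂ : Finset V, Disjoint V₁ V₂ ∧ V₁ ∪ V₂ = verts Y ∧
       2 ≤ V₁.card ∧ 2 ≤ V₂.card ∧
       sjoin (stdSphere V₁) (stdSphere V₂) ⊆ Y)) := by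
  classical
  obtain ⟨s₀, hs₀⟩ := hY.1
  obtain ⟨F, hFf, -⟩ := exists_facet hs₀
  have hFY : F ∈ Y := (Finset.mem_filter.1 hFf).1
  have hF5 : F.card = 5 := hpure F hFf
  have hFsub : F ⊆ verts Y := subset_verts hFY
  -- every 4-face lies in two distinct 5-faces
  have two5 : ∀ s ∈ Y, s.card = 4 → ∃ t₁, t₁ ∈ Y ∧ ∃ t₂, t₂ ∈ Y ∧
      s ⊆ t₁ ∧ s ⊆ t₂ ∧ t₁.card = 5 ∧ t₂.card = 5 ∧ t₁ ≠ t₂ := by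
    intro s hs h4
    have h2 := hdeg s hs h4
    rw [degOf] at h2
    obtain ⟨t₁, ht₁, t₂, ht₂, hne⟩ := Finset.one_lt_card.1 (lt_of_lt_of_le one_lt_two h2)
    rcases Finset.mem_filter.1 ht₁ with ⟨ht₁Y, hst₁, hc₁⟩
    rcases Finset.mem_filter.1 ht₂ with ⟨ht₂Y, hst₂, hc₂⟩
    exact ⟨t₁, ht₁Y, t₂, ht₂Y, hst₁, hst₂, hc₁, hc₂, hne⟩
  have five_eq : ∀ t : Finset V, ∀ s : Finset V, s ⊆ t → t.card = 5 → s.card = 4 →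
      ∃ x, x ∉ s ∧ t = insert x s := by
    intro t s hst hc5 hc4
    have : (t \ s).Nonempty := by
      rw [← Finset.card_pos, Finset.card_sdiff_of_subset hst]
      omega
    obtain ⟨x, hx⟩ := this
    rcases Finset.mem_sdiff.1 hx with ⟨hxt, hxs⟩
    refine ⟨x, hxs, ?_⟩
    have hsub : insert x s ⊆ t := Finset.insert_subset hxt hst
    have hcard : (insert x s).card = 5 := by
      rw [Finset.card_insert_of_notMem hxs]; omega
    exact (Finset.eq_of_subset_of_card_le hsub (by omega)).symm
  -- at least 6 vertices
  have hn6 : 6 ≤ (verts Y).card := by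
    obtain ⟨s, hsF, hs4⟩ := Finset.exists_subset_card_eq (s := F) (n := 4) (by omega)
    have hsY : s ∈ Y := hY.2.2 F hFY s hsF (Finset.card_pos.1 (by omega))
    obtain ⟨t₁, ht₁Y, t₂, ht₂Y, -, -, hc₁, hc₂, hne⟩ := two5 s hsY hs4
    by_contra hlt
    push_neg at hlt
    have e₁ : t₁ = verts Y := Finset.eq_of_subset_of_card_le (subset_verts ht₁Y) (by omega)
    have e₂ : t₂ = verts Y := Finset.eq_of_subset_of_card_le (subset_verts ht₂Y) (by omega)
    exact hne (e₁.trans e₂.symm)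
  have hn : (verts Y).card = 6 ∨ (verts Y).card = 7 := by omega
  rcases hn with hn | hn
  · -- 6 vertices : the whole boundary sphere on W = verts Y
    set W := verts Y with hWdef
    have hvd : (W \ F).card = 1 := by rw [Finset.card_sdiff_of_subset hFsub]; omega
    obtain ⟨v, hv⟩ := Finset.card_eq_one.1 hvd
    have hvW : v ∈ W ∧ v ∉ F := by
      have : v ∈ W \ F := by rw [hv]; exact Finset.mem_singleton_self v
      exact ⟨(Finset.mem_sdiff.1 this).1, (Finset.mem_sdiff.1 this).2⟩
    have hFW : F = W.erase v := by
      apply Finset.eq_of_subset_of_card_le (Finset.subset_erase.2 ⟨hFsub, hvW.2⟩)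
      rw [Finset.card_erase_of_mem hvW.1]
      omega
    have hmemF : ∀ u ∈ W, u ≠ v → u ∈ F := by
      intro u hu huv
      by_contra huF
      have : u ∈ W \ F := Finset.mem_sdiff.2 ⟨hu, huF⟩
      rw [hv, Finset.mem_singleton] at this
      exact huv this
    have hall : ∀ u ∈ W, W.erase u ∈ Y := by
      intro u hu
      by_cases huv : u = v
      · rw [huv, ← hFW]; exact hFY
      · have huF : u ∈ F := hmemF u hu huv
        set s := F.erase u with hsdef
        have hs4 : s.card = 4 := by rw [hsdef, Finset.card_erase_of_mem huF]; omega
        have hsY : s ∈ Y := hY.2.2 F hFY s (Finset.erase_subset u F)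
          (Finset.card_pos.1 (by omega))
        obtain ⟨t₁, ht₁Y, t₂, ht₂Y, hst₁, hst₂, hc₁, hc₂, hne⟩ := two5 s hsY hs4
        have hWe : insert v s = W.erase u := by
          ext a
          simp only [Finset.mem_insert, Finset.mem_erase, hsdef]
          constructor
          · rintro (rfl | ⟨ha1, ha2⟩)
            · exact ⟨fun h => hvW.2 (h ▸ huF), hvW.1⟩
            · exact ⟨ha1, hFsub ha2⟩
          · rintro ⟨ha1, ha2⟩
            by_cases hav : a = v
            · exact Or.inl hav
            · exact Or.inr ⟨ha1, hmemF a ha2 hav⟩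
        have key : ∀ t, t ∈ Y → s ⊆ t → t.card = 5 → t = F ∨ t = W.erase u := by
          intro t htY hst hc
          obtain ⟨x, hxs, hxt⟩ := five_eq t s hst hc hs4
          have hxW : x ∈ W := subset_verts htY (hxt ▸ Finset.mem_insert_self x s)
          by_cases hxv : x = v
          · right; rw [hxt, hxv, hWe]
          · have hxF : x ∈ F := hmemF x hxW hxv
            have hxu : x = u := by
              by_contra hxu
              exact hxs (Finset.mem_erase.2 ⟨hxu, hxF⟩)
            left; rw [hxt, hxu, hsdef, Finset.insert_erase huF]
        rcases key t₁ ht₁Y hst₁ hc₁ with e₁ | e₁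
        · rcases key t₂ ht₂Y hst₂ hc₂ with e₂ | e₂
          · exact absurd (e₁.trans e₂.symm) hne
          · rw [← e₂]; exact ht₂Y
        · rw [← e₁]; exact ht₁Y
    have hsub : stdSphere W ⊆ Y := sphere_sub hY hall
    exact ⟨⟨stdSphere W, hsub, isComplex_stdSphere (by omega), geom_sphere6 W hn⟩,
      Or.inl ⟨W, Finset.Subset.refl _, hn, hsub⟩⟩
  · -- 7 vertices
    set V' := verts Y with hV'def
    set adj : V → V → Prop := fun a b => V' \ {a, b} ∈ Y with hadj
    have hsymm : ∀ a b, adj a b → adj b a := by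
      intro a b h
      show V' \ {b, a} ∈ Y
      rwa [Finset.pair_comm b a]
    -- the elementary "insert" computation
    have hins : ∀ x y z : V, x ∈ V' → x ≠ y → x ≠ z →
        insert x (V' \ {x, y, z}) = V' \ {y, z} := by
      intro x y z hx hxy hxz
      ext a
      simp only [Finset.mem_insert, Finset.mem_sdiff, Finset.mem_singleton]
      constructor
      · rintro (rfl | ⟨h1, h2⟩)
        · exact ⟨hx, by tauto⟩
        · exact ⟨h1, by tauto⟩
      · rintro ⟨h1, h2⟩
        by_cases hax : a = x
        · exact Or.inl hax
        · exact Or.inr ⟨h1, by tauto⟩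
    -- property P
    have P : ∀ a b c : V, a ∈ V' → b ∈ V' → c ∈ V' → a ≠ b → a ≠ c → b ≠ c →
        adj a b → adj a c ∨ adj b c := by
      intro a b c ha hb hc hab hac hbc habY
      set s := V' \ {a, b, c} with hsdef
      have hcard3 : ({a, b, c} : Finset V).card = 3 := by
        rw [Finset.card_insert_of_notMem (by simp [hab, hac]),
          Finset.card_insert_of_notMem (by simp [hbc]), Finset.card_singleton]
      have hsub3 : ({a, b, c} : Finset V) ⊆ V' := by
        intro u hu
        simp only [Finset.mem_insert, Finset.mem_singleton] at hu
        rcases hu with rfl | rfl | rfl <;> assumption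
      have hs4 : s.card = 4 := by rw [hsdef, Finset.card_sdiff_of_subset hsub3, hn, hcard3]
      have hssub : s ⊆ V' \ {a, b} := by
        apply Finset.sdiff_subset_sdiff (Finset.Subset.refl _)
        intro u hu
        simp only [Finset.mem_insert, Finset.mem_singleton] at hu ⊢
        tauto
      have hsY : s ∈ Y := hY.2.2 _ habY s hssub (Finset.card_pos.1 (by omega))
      obtain ⟨t₁, ht₁Y, t₂, ht₂Y, hst₁, hst₂, hc₁, hc₂, hne⟩ := two5 s hsY hs4
      have key : ∀ t, t ∈ Y → s ⊆ t → t.card = 5 →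
          t = V' \ {b, c} ∨ t = V' \ {a, c} ∨ t = V' \ {a, b} := by
        intro t htY hst hc
        obtain ⟨x, hxs, hxt⟩ := five_eq t s hst hc hs4
        have hxV : x ∈ V' := subset_verts htY (hxt ▸ Finset.mem_insert_self x s)
        have hxabc : x = a ∨ x = b ∨ x = c := by
          by_contra hx
          push_neg at hx
          refine hxs (Finset.mem_sdiff.2 ⟨hxV, ?_⟩)
          simp only [Finset.mem_insert, Finset.mem_singleton]
          push_neg
          exact hx
        rcases hxabc with rfl | rfl | rfl
        · left; rw [hxt, hsdef, hins x b c hxV hab hac]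
        · right; left
          have : ({a, x, c} : Finset V) = {x, a, c} := by
            ext u; simp only [Finset.mem_insert, Finset.mem_singleton]; tauto
          rw [hxt, hsdef, this, hins x a c hxV (Ne.symm hab) hbc]
        · right; right
          have : ({a, b, x} : Finset V) = {x, a, b} := by
            ext u; simp only [Finset.mem_insert, Finset.mem_singleton]; tauto
          rw [hxt, hsdef, this, hins x a b hxV (Ne.symm hac) (Ne.symm hbc)]
      rcases key t₁ ht₁Y hst₁ hc₁ with e₁ | e₁ | e₁
      · refine Or.inr ?_; show V' \ {b, c} ∈ Y; rw [← e₁]; exact ht₁Y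
      · refine Or.inl ?_; show V' \ {a, c} ∈ Y; rw [← e₁]; exact ht₁Y
      · rcases key t₂ ht₂Y hst₂ hc₂ with e₂ | e₂ | e₂
        · refine Or.inr ?_; show V' \ {b, c} ∈ Y; rw [← e₂]; exact ht₂Y
        · refine Or.inl ?_; show V' \ {a, c} ∈ Y; rw [← e₂]; exact ht₂Y
        · exact absurd (e₁.trans e₂.symm) hne
    -- an edge exists
    have hFd : (V' \ F).card = 2 := by rw [Finset.card_sdiff_of_subset hFsub]; omega
    obtain ⟨a₀, b₀, hab₀, hpair⟩ := Finset.card_eq_two.1 hFd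
    have ha₀ : a₀ ∈ V' ∧ a₀ ∉ F := by
      have : a₀ ∈ V' \ F := by rw [hpair]; simp
      exact ⟨(Finset.mem_sdiff.1 this).1, (Finset.mem_sdiff.1 this).2⟩
    have hb₀ : b₀ ∈ V' ∧ b₀ ∉ F := by
      have : b₀ ∈ V' \ F := by rw [hpair]; simp
      exact ⟨(Finset.mem_sdiff.1 this).1, (Finset.mem_sdiff.1 this).2⟩
    have hedge : adj a₀ b₀ := by
      have : V' \ (V' \ F) = F := Finset.sdiff_sdiff_eq_self hFsub
      rw [hadj]
      show V' \ {a₀, b₀} ∈ Y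
      rw [← hpair, this]
      exact hFY
    by_cases hstar : ∃ v ∈ V', ∀ u ∈ V', u ≠ v → adj v u
    · -- a dominating vertex : sphere on the other 6
      obtain ⟨v, hvV, hvadj⟩ := hstar
      set W := V'.erase v with hWdef
      have hW6 : W.card = 6 := by rw [hWdef, Finset.card_erase_of_mem hvV, hn]
      have hWsub : W ⊆ V' := Finset.erase_subset v V'
      have herase : ∀ u ∈ W, W.erase u = V' \ {v, u} := by
        intro u hu
        ext a
        simp only [hWdef, Finset.mem_erase, Finset.mem_sdiff, Finset.mem_insert,
          Finset.mem_singleton]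
        constructor
        · rintro ⟨h1, h2, h3⟩; exact ⟨h3, by tauto⟩
        · rintro ⟨h1, h2⟩; push_neg at h2; exact ⟨h2.2, h2.1, h1⟩
      have hall : ∀ u ∈ W, W.erase u ∈ Y := by
        intro u hu
        rw [herase u hu]
        exact hvadj u (hWsub hu) (Finset.mem_erase.1 hu).1
      have hsub : stdSphere W ⊆ Y := sphere_sub hY hall
      exact ⟨⟨stdSphere W, hsub, isComplex_stdSphere (by omega), geom_sphere6 W hW6⟩,
        Or.inl ⟨W, hWsub, hW6, hsub⟩⟩
    · -- no dominating vertex : a complete bipartite structure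
      push_neg at hstar
      have hnoniso : ∀ a ∈ V', ∃ u ∈ V', u ≠ a ∧ adj a u := by
        intro a ha
        by_cases h1 : a = a₀
        · exact ⟨b₀, hb₀.1, by rw [h1]; exact Ne.symm hab₀, h1 ▸ hedge⟩
        · by_cases h2 : a = b₀
          · exact ⟨a₀, ha₀.1, by rw [h2]; exact hab₀, h2 ▸ hsymm _ _ hedge⟩
          · rcases P a₀ b₀ a ha₀.1 hb₀.1 ha hab₀ (Ne.symm h1) (Ne.symm h2) hedge with h | h
            · exact ⟨a₀, ha₀.1, Ne.symm h1, hsymm _ _ h⟩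
            · exact ⟨b₀, hb₀.1, Ne.symm h2, hsymm _ _ h⟩
      set C := V'.filter (fun x => x = a₀ ∨ ¬ adj a₀ x) with hCdef
      set D := V' \ C with hDdef
      have hCsub : C ⊆ V' := Finset.filter_subset _ _
      have ha₀C : a₀ ∈ C := Finset.mem_filter.2 ⟨ha₀.1, Or.inl rfl⟩
      have hmemD : ∀ y, y ∈ D ↔ y ∈ V' ∧ y ≠ a₀ ∧ adj a₀ y := by
        intro y
        simp only [hDdef, Finset.mem_sdiff, hCdef, Finset.mem_filter]
        constructor
        · rintro ⟨h1, h2⟩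
          push_neg at h2
          have := h2 h1
          exact ⟨h1, this.1, this.2⟩
        · rintro ⟨h1, h2, h3⟩
          exact ⟨h1, fun h => by tauto⟩
      obtain ⟨w, hwV, hwa, hwadj⟩ := hstar a₀ ha₀.1
      have hwC : w ∈ C := Finset.mem_filter.2 ⟨hwV, Or.inr hwadj⟩
      have hC2 : 2 ≤ C.card := Finset.one_lt_card.2 ⟨a₀, ha₀C, w, hwC, Ne.symm hwa⟩
      have hb₀D : b₀ ∈ D := (hmemD b₀).2 ⟨hb₀.1, Ne.symm hab₀, hedge⟩
      have hD2 : 2 ≤ D.card := by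
        by_contra hlt
        push_neg at hlt
        have honly : ∀ x ∈ D, x = b₀ := by
          intro x hx
          exact Finset.card_le_one.1 (by omega) x hx b₀ hb₀D
        obtain ⟨w', hw'V, hw'b, hw'adj⟩ := hstar b₀ hb₀.1
        have hw'a : w' ≠ a₀ := by
          rintro rfl
          exact hw'adj (hsymm _ _ hedge)
        have hw'D : w' ∉ D := fun h => hw'b (honly w' h)
        have hw'C : w' ∈ C := by
          by_contra hC
          exact hw'D (Finset.mem_sdiff.2 ⟨hw'V, hC⟩)
        have hw'nadj : ¬ adj a₀ w' := by
          rcases Finset.mem_filter.1 hw'C with ⟨-, h | h⟩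
          · exact absurd h hw'a
          · exact h
        rcases P a₀ b₀ w' ha₀.1 hb₀.1 hw'V hab₀ (Ne.symm hw'a) (Ne.symm hw'b) hedge with h | h
        · exact hw'nadj h
        · exact hw'adj h
      have hcross : ∀ x ∈ C, ∀ y ∈ D, adj x y := by
        intro x hx y hy
        rcases (hmemD y).1 hy with ⟨hyV, hya, hyadj⟩
        rcases Finset.mem_filter.1 hx with ⟨hxV, hxcase⟩
        by_cases hxa : x = a₀
        · exact hxa ▸ hyadj
        · have hxnadj : ¬ adj a₀ x := by tauto
          have hxy : x ≠ y := by
            rintro rfl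
            rcases (hmemD x).1 hy with ⟨-, -, h⟩
            exact hxnadj h
          rcases P a₀ y x ha₀.1 hyV hxV (Ne.symm hya) (Ne.symm hxa) (Ne.symm hxy) hyadj
            with h | h
          · exact absurd h hxnadj
          · exact hsymm _ _ h
      have hdisj : Disjoint C D := Finset.disjoint_sdiff
      have hunion : C ∪ D = V' := Finset.union_sdiff_of_subset hCsub
      have hjoin : sjoin (stdSphere C) (stdSphere D) ⊆ Y :=
        sjoin_spheres_subset hY hdisj hunion
          (Finset.card_pos.1 (by omega)) (Finset.card_pos.1 (by omega))
          (fun x hx y hy => hcross x hx y hy)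
      have hsum : C.card + D.card = 7 := by
        rw [hDdef, Finset.card_sdiff_of_subset hCsub, hn]
        have := Finset.card_le_card hCsub
        omega
      exact ⟨⟨sjoin (stdSphere C) (stdSphere D), hjoin,
        isComplex_sjoin_spheres hC2 hD2 hdisj, geom_join C D hdisj hC2 hD2 hsum⟩,
        Or.inr ⟨C, D, hdisj, hunion, hC2, hD2, hjoin⟩⟩

end HomologySpheres
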